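/- arXiv:1311.3895 — 4 statements merged into one kernel-verified Lean document; each statement's English description precedes it below -/
import Mathlib

section
/- For every integer d ≥ 1, every μ ∈ M_c^+(ℝ^d), and every α ∈ [0,∞]: f̲^LD_μ(α) ≤ τ̄_μ*(α), where τ̄_μ* denotes the extended concave Legendre–Fenchel transform of the upper L^q-spectrum τ̄_μ. -/
open MeasureTheory Metric Set Filter Topology
open scoped ENNReal NNReal

noncomputable section

/-- `ℝ^d` with the Euclidean metric. -/
abbrev Euc (d : ℕ) : Type := EuclideanSpace ℝ (Fin d)

/-- The topological support of a Borel measure on `ℝ^d`. -/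
def msupp {d : ℕ} (μ : Measure (Euc d)) : Set (Euc d) :=
  {x | ∀ r : ℝ, 0 < r → 0 < μ (closedBall x r)}

/-- `μ ∈ 𝓜_c^+(ℝ^d)`: a nonzero finite compactly supported Borel measure. -/
def McPlus {d : ℕ} (μ : Measure (Euc d)) : Prop :=
  IsFiniteMeasure μ ∧ μ ≠ 0 ∧ ∃ K : Set (Euc d), IsCompact K ∧ μ Kᶜ = 0

/-- Logarithm `ℝ≥0∞ → EReal`, with `log 0 = ⊥` and `log ⊤ = ⊤`. -/
def elog (x : ℝ≥0∞) : EReal :=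
  if x = 0 then ⊥ else if x = ⊤ then ⊤ else ((Real.log x.toReal : ℝ) : EReal)

/-- Lower local dimension `liminf_{r→0⁺} log μ(B(x,r)) / log r`, valued in `EReal`. -/
def dLow {d : ℕ} (μ : Measure (Euc d)) (x : Euc d) : EReal :=
  Filter.liminf
    (fun r : ℝ => elog (μ (closedBall x r)) * (((Real.log r)⁻¹ : ℝ) : EReal)) (𝓝[>] (0:ℝ))

/-- Upper local dimension `limsup_{r→0⁺} log μ(B(x,r)) / log r`, valued in `EReal`. -/
def dUp {d : ℕ} (μ : Measure (Euc d)) (x : Euc d) : EReal :=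
  Filter.limsup
    (fun r : ℝ => elog (μ (closedBall x r)) * (((Real.log r)⁻¹ : ℝ) : EReal)) (𝓝[>] (0:ℝ))

/-- The level set `E(μ,α,β)`. -/
def Eab {d : ℕ} (μ : Measure (Euc d)) (α β : EReal) : Set (Euc d) :=
  {x ∈ msupp μ | dLow μ x = α ∧ dUp μ x = β}

/-- The level set `E̲(μ,α)`. -/
def Elow {d : ℕ} (μ : Measure (Euc d)) (α : EReal) : Set (Euc d) :=
  {x ∈ msupp μ | dLow μ x = α}

/-- The level set `Ē(μ,α)`. -/
def Eup {d : ℕ} (μ : Measure (Euc d)) (α : EReal) : Set (Euc d) :=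
  {x ∈ msupp μ | dUp μ x = α}

/-- The level set `E(μ,α) = E(μ,α,α)`. -/
def Epoint {d : ℕ} (μ : Measure (Euc d)) (α : EReal) : Set (Euc d) := Eab μ α α

-- Hausdorff dimension with the convention `dim_H ∅ = −∞`, valued in `EReal`.
open Classical in
def dimHE {X : Type*} [EMetricSpace X] (s : Set X) : EReal :=
  if s = ∅ then ⊥ else ((dimH s : ℝ≥0∞) : EReal)

/-- A centered packing of `supp μ` by pairwise disjoint closed balls of radius `r`. -/
def IsPacking {d : ℕ} (μ : Measure (Euc d)) (r : ℝ) (P : Set (Euc d)) : Prop :=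
  P ⊆ msupp μ ∧ P.PairwiseDisjoint fun x => closedBall x r

/-- `sup { Σ_i μ(B(x_i,r))^q }` over all centered packings of radius `r`. -/
def packSum {d : ℕ} (μ : Measure (Euc d)) (q r : ℝ) : ℝ≥0∞ :=
  ⨆ (P : Set (Euc d)) (_ : IsPacking μ r P), ∑' x : P, μ (closedBall (x : Euc d) r) ^ q

/-- The lower `L^q`-spectrum `τ_μ`. -/
def tauLow {d : ℕ} (μ : Measure (Euc d)) (q : ℝ) : EReal :=
  Filter.liminf (fun r : ℝ => elog (packSum μ q r) * (((Real.log r)⁻¹ : ℝ) : EReal)) (𝓝[>] (0:ℝ))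

/-- The upper `L^q`-spectrum `τ̄_μ`. -/
def tauUp {d : ℕ} (μ : Measure (Euc d)) (q : ℝ) : EReal :=
  Filter.limsup (fun r : ℝ => elog (packSum μ q r) * (((Real.log r)⁻¹ : ℝ) : EReal)) (𝓝[>] (0:ℝ))

/-- Extended concave Legendre–Fenchel transform of `τ : ℝ → ℝ∪{−∞}` at `α ∈ ℝ∪{∞}`;
the `EReal` product `α * q` encodes the conventions `∞·q = −∞` for `q < 0`, `∞·0 = 0`. -/
def eLegendre (τ : ℝ → EReal) (α : EReal) : EReal :=
  sInf {v : EReal | ∃ q : ℝ, τ q ≠ ⊥ ∧ (α = ⊤ → q ≤ 0) ∧ v = α * (q : EReal) - τ q}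

/-- Legendre–Fenchel transform `f*` of a spectrum `f` defined on `ℝ∪{∞}`;
the `EReal` product `q * α` encodes the conventions `q·∞ = ±∞` for `q ≷ 0`, `0·∞ = 0`. -/
def specStar (f : EReal → EReal) (q : ℝ) : EReal :=
  sInf {v : EReal | ∃ α : EReal, α ≠ ⊥ ∧ f α ≠ ⊥ ∧ v = (q : EReal) * α - f α}

/-- `sup #{i : lo ≤ μ(B(x_i,r)) ≤ hi}` over all centered packings of radius `r`. -/
def ldCount {d : ℕ} (μ : Measure (Euc d)) (lo hi : ℝ≥0∞) (r : ℝ) : ℝ≥0∞ :=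
  ⨆ (P : Set (Euc d)) (_ : IsPacking μ r P),
    ({x ∈ P | lo ≤ μ (closedBall x r) ∧ μ (closedBall x r) ≤ hi}).encard

/-- `r ^ γ` for an extended exponent `γ`, with the convention `r^∞ = 0`. -/
def rpowE (r : ℝ) (γ : EReal) : ℝ≥0∞ :=
  if γ = ⊤ then 0 else if γ = ⊥ then ⊤ else ENNReal.ofReal (r ^ γ.toReal)

/-- The lower large-deviations spectrum `f̲^LD_μ(α,β)` for `0 ≤ α ≤ β ≤ ∞`. -/
def fLDlowAB {d : ℕ} (μ : Measure (Euc d)) (α β : EReal) : EReal :=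
  if α = ⊤ then
    ⨅ A : ℝ, Filter.liminf
      (fun r : ℝ => elog (ldCount μ 0 (ENNReal.ofReal (r ^ A)) r) * (((-Real.log r)⁻¹ : ℝ) : EReal))
      (𝓝[>] (0:ℝ))
  else
    ⨅ (ε : ℝ) (_ : 0 < ε), Filter.liminf
      (fun r : ℝ =>
        elog (ldCount μ (rpowE r (β + (ε : EReal))) (rpowE r (α - (ε : EReal))) r) *
          (((-Real.log r)⁻¹ : ℝ) : EReal))
      (𝓝[>] (0:ℝ))

/-- The lower large-deviations spectrum `f̲^LD_μ(α)`. -/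
def fLDlow {d : ℕ} (μ : Measure (Euc d)) (α : EReal) : EReal := fLDlowAB μ α α

/-- The upper large-deviations spectrum `f̄^LD_μ(α)`. -/
def fLDup {d : ℕ} (μ : Measure (Euc d)) (α : EReal) : EReal :=
  if α = ⊤ then
    ⨅ A : ℝ, Filter.limsup
      (fun r : ℝ => elog (ldCount μ 0 (ENNReal.ofReal (r ^ A)) r) * (((-Real.log r)⁻¹ : ℝ) : EReal))
      (𝓝[>] (0:ℝ))
  else
    ⨅ (ε : ℝ) (_ : 0 < ε), Filter.limsup
      (fun r : ℝ =>
        elog (ldCount μ (rpowE r (α + (ε : EReal))) (rpowE r (α - (ε : EReal))) r) *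
          (((-Real.log r)⁻¹ : ℝ) : EReal))
      (𝓝[>] (0:ℝ))

/-- `μ` is exact dimensional with dimension `D`. -/
def ExactDim {d : ℕ} (μ : Measure (Euc d)) (D : ℝ) : Prop :=
  ∀ᵐ x ∂μ, Filter.Tendsto (fun r : ℝ => Real.log (μ (closedBall x r)).toReal / Real.log r)
    (𝓝[>] (0:ℝ)) (𝓝 D)

/-- `μ` is homogeneously multifractal: the lower Hausdorff spectrum of the restriction of `μ`
to any closed ball whose interior meets `supp μ` coincides with that of `μ`. -/
def HMmeas {d : ℕ} (μ : Measure (Euc d)) : Prop :=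
  ∀ (c : Euc d) (R : ℝ), (interior (closedBall c R) ∩ msupp μ).Nonempty →
    ∀ α : EReal, 0 ≤ α →
      dimHE (Elow (μ.restrict (closedBall c R)) α) = dimHE (Elow μ α)

/-- The necessary properties of an `L^q`-spectrum in dimension `d`. -/
structure IsLqSpec (d : ℕ) (τ : ℝ → EReal) : Prop where
  ne_top : ∀ q : ℝ, τ q ≠ ⊤
  concave : ∀ q₁ q₂ t : ℝ, 0 ≤ t → t ≤ 1 →
    ((t : ℝ) : EReal) * τ q₁ + (((1 - t : ℝ)) : EReal) * τ q₂ ≤ τ (t * q₁ + (1 - t) * q₂)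
  mono : Monotone τ
  at_one : τ 1 = 0
  neg_d_le : -(((d : ℝ)) : EReal) ≤ τ 0
  le_zero : τ 0 ≤ 0
  dom : {q : ℝ | τ q ≠ ⊥} = Set.univ ∨ {q : ℝ | τ q ≠ ⊥} = Set.Ici 0
  star_nonneg : ∀ α : EReal, eLegendre τ α ≠ ⊥ → 0 ≤ eLegendre τ α

/-- The class `𝓕(d)` of candidate lower Hausdorff spectra, viewed as functions on
`ℝ∪{∞} ⊂ EReal` (the value at `⊥` is irrelevant: the domain condition forces `f ⊥ = ⊥`). -/
structure IsFd (d : ℕ) (f : EReal → EReal) : Prop where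
  hasFix : ∃ D : ℝ, f ((D : ℝ) : EReal) = ((D : ℝ) : EReal)
  dom_sub : {α : EReal | f α ≠ ⊥} ⊆ Set.Ici (0 : EReal)
  dom_closed : IsClosed {α : EReal | f α ≠ ⊥}
  range' : ∀ α : EReal, f α = ⊥ ∨ (0 ≤ f α ∧ f α ≤ ((d : ℝ) : EReal))
  usc : UpperSemicontinuousOn f {α : EReal | ⊥ < α}
  le_id : ∀ α : EReal, f α ≤ α

/-- Concavity of a spectrum on the real part of its domain. -/
def SpecConcave (f : EReal → EReal) : Prop :=
  ∀ α₁ α₂ t : ℝ, f ((α₁ : ℝ) : EReal) ≠ ⊥ → f ((α₂ : ℝ) : EReal) ≠ ⊥ → 0 ≤ t → t ≤ 1 →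
    ((t : ℝ) : EReal) * f ((α₁ : ℝ) : EReal) + (((1 - t : ℝ)) : EReal) * f ((α₂ : ℝ) : EReal) ≤
      f (((t * α₁ + (1 - t) * α₂ : ℝ)) : EReal)


/-! ### Auxiliary lemmas for Statement 13 -/

lemma encard_mul_le_tsum {X : Type*} (s : Set X) (f : X → ℝ≥0∞) (c : ℝ≥0∞)
    (h : ∀ x ∈ s, c ≤ f x) : s.encard * c ≤ ∑' x : s, f x := by
  rw [← ENNReal.tsum_set_const s c]
  exact ENNReal.tsum_le_tsum fun x => h x x.2

lemma ldCount_mul_le_packSum {d : ℕ} (μ : Measure (Euc d)) (q r : ℝ) (lo hi c : ℝ≥0∞)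
    (hc : ∀ m : ℝ≥0∞, lo ≤ m → m ≤ hi → c ≤ m ^ q) :
    ldCount μ lo hi r * c ≤ packSum μ q r := by
  simp only [ldCount, ENNReal.iSup_mul]
  refine iSup_le fun P => iSup_le fun hP => ?_
  set P' : Set (Euc d) := {x ∈ P | lo ≤ μ (closedBall x r) ∧ μ (closedBall x r) ≤ hi} with hP'def
  have hP' : IsPacking μ r P' :=
    ⟨fun x hx => hP.1 hx.1, hP.2.subset fun x hx => hx.1⟩
  calc P'.encard * c ≤ ∑' x : P', μ (closedBall (x : Euc d) r) ^ q :=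
        encard_mul_le_tsum P' (fun x => μ (closedBall x r) ^ q) c fun x hx => hc _ hx.2.1 hx.2.2
    _ ≤ packSum μ q r := le_iSup₂_of_le P' hP' le_rfl

lemma elog_real (x : ℝ≥0∞) (h0 : x ≠ 0) (ht : x ≠ ⊤) :
    elog x = ((Real.log x.toReal : ℝ) : EReal) := by simp [elog, h0, ht]

lemma core_ineq (r : ℝ) (hr0 : 0 < r) (hr1 : r < 1) (N S : ℝ≥0∞) (e : ℝ)
    (h : N * ENNReal.ofReal (r ^ e) ≤ S) :
    elog N * (((-Real.log r)⁻¹ : ℝ) : EReal)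
      ≤ (e : EReal) + elog S * (((-Real.log r)⁻¹ : ℝ) : EReal) := by
  have hlog : Real.log r < 0 := Real.log_neg hr0 hr1
  have hL : (0:ℝ) < -Real.log r := by linarith
  have hLpos : (0:ℝ) < (-Real.log r)⁻¹ := by positivity
  have hc : (0:ℝ) < r ^ e := Real.rpow_pos_of_pos hr0 e
  rcases eq_or_ne N 0 with rfl | hN0
  · have : elog 0 = ⊥ := by simp [elog]
    rw [this, EReal.bot_mul_coe_of_pos hLpos]
    exact bot_le
  rcases eq_or_ne S ⊤ with rfl | hSt
  · have : elog ⊤ = ⊤ := by simp [elog]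
    rw [this, EReal.top_mul_coe_of_pos hLpos, EReal.add_top_of_ne_bot (EReal.coe_ne_bot e)]
    exact le_top
  rcases eq_or_ne N ⊤ with rfl | hNt
  · exfalso
    have hne : ENNReal.ofReal (r ^ e) ≠ 0 := by
      simp only [ne_eq, ENNReal.ofReal_eq_zero, not_le]; exact hc
    have : (⊤ : ℝ≥0∞) * ENNReal.ofReal (r ^ e) = ⊤ := ENNReal.top_mul hne
    exact hSt (top_le_iff.1 (this ▸ h))
  have hS0 : S ≠ 0 := by
    rintro rfl
    have h2 : N * ENNReal.ofReal (r ^ e) = 0 := le_antisymm h zero_le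
    rcases mul_eq_zero.1 h2 with h3 | h3
    · exact hN0 h3
    · rw [ENNReal.ofReal_eq_zero] at h3; exact absurd hc (not_lt.2 h3)
  have hNpos : 0 < N.toReal := ENNReal.toReal_pos hN0 hNt
  have hSpos : 0 < S.toReal := ENNReal.toReal_pos hS0 hSt
  have key : N.toReal * (r ^ e) ≤ S.toReal := by
    have h4 : (N * ENNReal.ofReal (r ^ e)).toReal ≤ S.toReal :=
      ENNReal.toReal_mono hSt h
    rwa [ENNReal.toReal_mul, ENNReal.toReal_ofReal hc.le] at h4
  rw [elog_real N hN0 hNt, elog_real S hS0 hSt, ← EReal.coe_mul, ← EReal.coe_mul,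
    ← EReal.coe_add, EReal.coe_le_coe_iff]
  have hlog2 : Real.log N.toReal + e * Real.log r ≤ Real.log S.toReal := by
    have h5 := Real.log_le_log (by positivity) key
    rwa [Real.log_mul (ne_of_gt hNpos) (ne_of_gt hc), Real.log_rpow hr0] at h5
  have h6 : Real.log N.toReal ≤ Real.log S.toReal + e * (-Real.log r) := by linarith
  calc Real.log N.toReal * (-Real.log r)⁻¹
      ≤ (Real.log S.toReal + e * (-Real.log r)) * (-Real.log r)⁻¹ :=
        mul_le_mul_of_nonneg_right h6 hLpos.le
    _ = e + Real.log S.toReal * (-Real.log r)⁻¹ := by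
        rw [add_mul, mul_assoc, mul_inv_cancel₀ (ne_of_gt hL), mul_one, add_comm]

lemma liminf_le_sub {d : ℕ} (μ : Measure (Euc d)) (q e : ℝ) (N : ℝ → ℝ≥0∞)
    (hNS : ∀ᶠ r in 𝓝[>] (0:ℝ), N r * ENNReal.ofReal (r ^ e) ≤ packSum μ q r) :
    Filter.liminf (fun r : ℝ => elog (N r) * (((-Real.log r)⁻¹ : ℝ) : EReal)) (𝓝[>] (0:ℝ))
      ≤ (e : EReal) - tauUp μ q := by
  have h01 : ∀ᶠ r in 𝓝[>] (0:ℝ), r ∈ Set.Ioo (0:ℝ) 1 :=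
    Filter.eventually_of_mem (Ioo_mem_nhdsGT_of_mem ⟨le_refl 0, zero_lt_one⟩) fun x hx => hx
  set g : ℝ → EReal := fun r => elog (packSum μ q r) * (((Real.log r)⁻¹ : ℝ) : EReal) with hg
  have hle : ∀ᶠ r in 𝓝[>] (0:ℝ),
      elog (N r) * (((-Real.log r)⁻¹ : ℝ) : EReal)
        ≤ ((fun _ : ℝ => (e : EReal)) + fun r : ℝ => -(g r)) r := by
    filter_upwards [h01, hNS] with r hr hS
    have hcore := core_ineq r hr.1 hr.2 (N r) (packSum μ q r) e hS
    have hrw : (((-Real.log r)⁻¹ : ℝ) : EReal) = -(((Real.log r)⁻¹ : ℝ) : EReal) := by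
      rw [inv_neg, EReal.coe_neg]
    rw [hrw, mul_neg] at hcore
    simpa [hg, hrw] using hcore
  refine le_trans (Filter.liminf_le_liminf hle) ?_
  have h1 : Filter.limsup (fun _ : ℝ => (e : EReal)) (𝓝[>] (0:ℝ)) = (e : EReal) :=
    Filter.limsup_const _
  have h2 : Filter.liminf (fun r : ℝ => -(g r)) (𝓝[>] (0:ℝ)) = - tauUp μ q := by
    have := EReal.liminf_neg (f := 𝓝[>] (0:ℝ)) (v := g)
    exact this
  refine le_trans (EReal.liminf_add_le ?_ ?_) ?_
  · rw [h1]; exact Or.inl (EReal.coe_ne_bot e)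
  · rw [h1]; exact Or.inl (EReal.coe_ne_top e)
  · rw [h1, h2, sub_eq_add_neg]

lemma ennreal_rpow_anti {m M : ℝ≥0∞} {q : ℝ} (hq : q ≤ 0) (h : m ≤ M) : M ^ q ≤ m ^ q := by
  have hq' : 0 ≤ -q := by linarith
  have h1 : M ^ q = (M ^ (-q))⁻¹ := by rw [← ENNReal.rpow_neg, neg_neg]
  have h2 : m ^ q = (m ^ (-q))⁻¹ := by rw [← ENNReal.rpow_neg, neg_neg]
  rw [h1, h2]
  exact ENNReal.inv_le_inv.2 (ENNReal.rpow_le_rpow h hq')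

lemma ereal_le_bot_of_forall_le_coe (x : EReal) (h : ∀ z : ℝ, x ≤ (z : EReal)) : x ≤ ⊥ := by
  by_contra hx
  push_neg at hx
  obtain ⟨w, _, hw2⟩ := EReal.exists_between_coe_real hx
  exact absurd (h w) (not_le.2 hw2)

lemma le_coe_sub_of_forall (x : EReal) (c k : ℝ) (T : EReal) (hk : 0 ≤ k) (hT : T ≠ ⊥)
    (h : ∀ ε : ℝ, 0 < ε → x ≤ ((c + k * ε : ℝ) : EReal) - T) :
    x ≤ (c : EReal) - T := by
  induction T with
  | bot => exact absurd rfl hT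
  | top =>
    have := h 1 zero_lt_one
    rw [EReal.sub_top] at this ⊢
    exact this
  | coe t =>
    by_contra hx
    push_neg at hx
    rw [show ((c : EReal) - (t : EReal)) = ((c - t : ℝ) : EReal) by rw [EReal.coe_sub]] at hx
    obtain ⟨w, hw1, hw2⟩ := EReal.exists_between_coe_real hx
    rcases eq_or_lt_of_le hk with hk0 | hkpos
    · have h7 := h 1 zero_lt_one
      rw [← hk0] at h7
      have hle : x ≤ ((c - t : ℝ) : EReal) := by
        rw [show ((c - t : ℝ) : EReal) = ((c + 0 * 1 : ℝ) : EReal) - (t : EReal) by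
          rw [← EReal.coe_sub]; norm_num]
        exact h7
      exact absurd hle (not_le.2 (lt_trans hw1 hw2))
    · set ε := (w - (c - t)) / k with hε_def
      have hwr : c - t < w := by exact_mod_cast hw1
      have hε : 0 < ε := div_pos (by linarith) hkpos
      have h8 := h ε hε
      have heq : c + k * ε - t = w := by
        rw [hε_def, mul_div_assoc', mul_comm k, mul_div_assoc, div_self (ne_of_gt hkpos), mul_one]
        ring
      rw [show ((c + k * ε : ℝ) : EReal) - (t : EReal) = ((c + k * ε - t : ℝ) : EReal) by
        rw [EReal.coe_sub], heq] at h8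
      exact absurd h8 (not_le.2 hw2)


/-- part of (1.2): `f̲^LD_μ(α) ≤ τ̄_μ*(α)` for every `α ∈ [0,∞]`. -/
theorem statement13 (d : ℕ) (hd : 1 ≤ d) (μ : Measure (Euc d)) (hμ : McPlus μ)
    (α : EReal) (h0 : 0 ≤ α) :
    fLDlow μ α ≤ eLegendre (tauUp μ) α := by
  refine le_sInf fun v hv => ?_
  obtain ⟨q, hq_ne_bot, hqtop, rfl⟩ := hv
  have h01 : ∀ᶠ r in 𝓝[>] (0:ℝ), r ∈ Set.Ioo (0:ℝ) 1 :=
    Filter.eventually_of_mem (Ioo_mem_nhdsGT_of_mem ⟨le_refl 0, zero_lt_one⟩) fun x hx => hx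
  rcases eq_or_ne α ⊤ with rfl | hαtop
  · -- α = ⊤
    have hq0 : q ≤ 0 := hqtop rfl
    have step : ∀ A : ℝ, fLDlow μ ⊤ ≤ ((q * A : ℝ) : EReal) - tauUp μ q := by
      intro A
      rw [fLDlow, fLDlowAB, if_pos rfl]
      refine le_trans (iInf_le _ A) (liminf_le_sub μ q (q * A) _ ?_)
      filter_upwards [h01] with r hr
      refine ldCount_mul_le_packSum μ q r _ _ _ fun m hlo hhi => ?_
      have hpos : (0:ℝ) < r ^ A := Real.rpow_pos_of_pos hr.1 A
      have hA : ENNReal.ofReal (r ^ (q * A)) = (ENNReal.ofReal (r ^ A)) ^ q := by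
        rw [ENNReal.ofReal_rpow_of_pos hpos, ← Real.rpow_mul hr.1.le, mul_comm]
      rw [hA]
      exact ennreal_rpow_anti hq0 hhi
    rcases lt_or_eq_of_le hq0 with hq | rfl
    · rw [EReal.top_mul_coe_of_neg hq, EReal.bot_sub]
      refine ereal_le_bot_of_forall_le_coe _ fun z => ?_
      rcases eq_or_ne (tauUp μ q) ⊤ with hT | hT
      · refine le_trans (step 0) ?_
        rw [hT, EReal.sub_top]
        exact bot_le
      · obtain ⟨t, ht⟩ : ∃ t : ℝ, tauUp μ q = (t : EReal) :=
          ⟨(tauUp μ q).toReal, (EReal.coe_toReal hT hq_ne_bot).symm⟩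
        refine le_trans (step ((z + t) / q)) ?_
        rw [ht, show ((q * ((z + t) / q) : ℝ) : EReal) - (t : EReal)
            = ((q * ((z + t) / q) - t : ℝ) : EReal) from (EReal.coe_sub _ _).symm ▸ rfl]
        have hzq : q * ((z + t) / q) - t = z := by
          rw [mul_comm, div_mul_cancel₀ _ (ne_of_lt hq)]
          ring
        rw [hzq]
    · calc fLDlow μ ⊤ ≤ ((0 * (0:ℝ) : ℝ) : EReal) - tauUp μ 0 := step 0
        _ = ⊤ * ((0:ℝ) : EReal) - tauUp μ 0 := by norm_num
  · -- α real
    have hαbot : α ≠ ⊥ := by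
      intro h
      rw [h] at h0
      exact absurd h0 (by simp)
    set a := α.toReal with ha_def
    have hα : α = (a : EReal) := (EReal.coe_toReal hαtop hαbot).symm
    have step : ∀ ε : ℝ, 0 < ε →
        fLDlow μ α ≤ ((a * q + |q| * ε : ℝ) : EReal) - tauUp μ q := by
      intro ε hε
      rw [fLDlow, fLDlowAB, if_neg hαtop]
      refine le_trans (iInf_le _ ε) (le_trans (iInf_le _ hε) ?_)
      rcases le_or_gt 0 q with hq | hq
      · have heq : a * q + |q| * ε = (a + ε) * q := by rw [abs_of_nonneg hq]; ring
        rw [heq]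
        refine liminf_le_sub μ q ((a + ε) * q) _ ?_
        filter_upwards [h01] with r hr
        refine ldCount_mul_le_packSum μ q r _ _ _ fun m hlo hhi => ?_
        have hloeq : rpowE r (α + (ε : EReal)) = ENNReal.ofReal (r ^ (a + ε)) := by
          rw [hα, ← EReal.coe_add]
          simp only [rpowE]
          rw [if_neg (EReal.coe_ne_top _), if_neg (EReal.coe_ne_bot _), EReal.toReal_coe]
        rw [hloeq] at hlo
        have hpos : (0:ℝ) < r ^ (a + ε) := Real.rpow_pos_of_pos hr.1 _
        have hA : ENNReal.ofReal (r ^ ((a + ε) * q)) = (ENNReal.ofReal (r ^ (a + ε))) ^ q := by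
          rw [ENNReal.ofReal_rpow_of_pos hpos, ← Real.rpow_mul hr.1.le]
        rw [hA]
        exact ENNReal.rpow_le_rpow hlo hq
      · have heq : a * q + |q| * ε = (a - ε) * q := by rw [abs_of_neg hq]; ring
        rw [heq]
        refine liminf_le_sub μ q ((a - ε) * q) _ ?_
        filter_upwards [h01] with r hr
        refine ldCount_mul_le_packSum μ q r _ _ _ fun m hlo hhi => ?_
        have hhieq : rpowE r (α - (ε : EReal)) = ENNReal.ofReal (r ^ (a - ε)) := by
          rw [hα, ← EReal.coe_sub]
          simp only [rpowE]
          rw [if_neg (EReal.coe_ne_top _), if_neg (EReal.coe_ne_bot _), EReal.toReal_coe]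
        rw [hhieq] at hhi
        have hpos : (0:ℝ) < r ^ (a - ε) := Real.rpow_pos_of_pos hr.1 _
        have hA : ENNReal.ofReal (r ^ ((a - ε) * q)) = (ENNReal.ofReal (r ^ (a - ε))) ^ q := by
          rw [ENNReal.ofReal_rpow_of_pos hpos, ← Real.rpow_mul hr.1.le]
        rw [hA]
        exact ennreal_rpow_anti hq.le hhi
    refine le_trans
      (le_coe_sub_of_forall _ (a * q) |q| _ (abs_nonneg q) hq_ne_bot step) ?_
    rw [show ((a * q : ℝ) : EReal) = α * (q : EReal) by rw [hα, EReal.coe_mul]]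


end
end

section
/- For every integer d ≥ 1 and every μ ∈ M_c^+(ℝ^d): f̄^LD_μ(∞) ≤ τ_μ*(∞) and dim_H E(μ,∞) ≤ τ_μ*(∞) (with the convention dim_H ∅ = −∞). Explicitly: if dom(τ_μ) = ℝ then f̄^LD_μ(∞) = −∞ and E(μ,∞) = ∅, and if dom(τ_μ) = [0,∞) then f̄^LD_μ(∞) ≤ −τ_μ(0) and dim_H E(μ,∞) ≤ −τ_μ(0). -/
open MeasureTheory Metric Set Filter Topology
open scoped ENNReal NNReal

noncomputable section

namespace St14

lemma key_ev {y : ℝ≥0∞} {c r : ℝ} (hr : 0 < r) (hr1 : r < 1)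
    (h : (c : EReal) < elog y * (((Real.log r)⁻¹ : ℝ) : EReal)) :
    y ≤ ENNReal.ofReal (r ^ c) := by
  have hlr : Real.log r < 0 := Real.log_neg hr hr1
  rcases eq_or_ne y 0 with rfl | hy0
  · exact zero_le
  rcases eq_or_ne y ⊤ with rfl | hytop
  · exfalso
    rw [elog, if_neg (by simp), if_pos rfl,
      EReal.top_mul_of_neg (by exact_mod_cast inv_neg''.2 hlr)] at h
    exact absurd h (by simp)
  · have hyt : 0 < y.toReal := ENNReal.toReal_pos hy0 hytop
    rw [elog, if_neg hy0, if_neg hytop, ← EReal.coe_mul, EReal.coe_lt_coe_iff] at h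
    have h2 : Real.log y.toReal < c * Real.log r := by
      rw [← div_eq_mul_inv] at h
      exact ((lt_div_iff_of_neg hlr).1 h)
    have h3 : y.toReal < r ^ c := by
      rw [Real.rpow_def_of_pos hr, mul_comm]
      calc y.toReal = Real.exp (Real.log y.toReal) := (Real.exp_log hyt).symm
        _ < Real.exp (c * Real.log r) := Real.exp_lt_exp.2 h2
    calc y = ENNReal.ofReal y.toReal := (ENNReal.ofReal_toReal hytop).symm
      _ ≤ ENNReal.ofReal (r ^ c) := ENNReal.ofReal_le_ofReal h3.le

lemma key_fwd {y : ℝ≥0∞} {b r : ℝ} (hr : 0 < r) (hr1 : r < 1)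
    (h : y ≤ ENNReal.ofReal (r ^ b)) :
    elog y * (((-Real.log r)⁻¹ : ℝ) : EReal) ≤ ((-b : ℝ) : EReal) := by
  have hlr : Real.log r < 0 := Real.log_neg hr hr1
  have hs : 0 < (-Real.log r)⁻¹ := inv_pos.2 (by linarith)
  rcases eq_or_ne y 0 with rfl | hy0
  · rw [elog, if_pos rfl, EReal.bot_mul_of_pos (by exact_mod_cast hs)]
    exact bot_le
  · have hytop : y ≠ ⊤ := ne_top_of_le_ne_top ENNReal.ofReal_ne_top h
    have hyt : 0 < y.toReal := ENNReal.toReal_pos hy0 hytop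
    rw [elog, if_neg hy0, if_neg hytop, ← EReal.coe_mul, EReal.coe_le_coe_iff]
    have h1 : y.toReal ≤ r ^ b := ENNReal.toReal_le_of_le_ofReal (Real.rpow_pos_of_pos hr b).le h
    have h2 : Real.log y.toReal ≤ b * Real.log r := by
      calc Real.log y.toReal ≤ Real.log (r ^ b) := Real.log_le_log hyt h1
        _ = b * Real.log r := Real.log_rpow hr b
    calc Real.log y.toReal * (-Real.log r)⁻¹ ≤ b * Real.log r * (-Real.log r)⁻¹ := by
          exact mul_le_mul_of_nonneg_right h2 hs.le
      _ = -b := by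
          rw [← div_eq_mul_inv, div_neg, mul_div_assoc, div_self hlr.ne, mul_one]

lemma key_rev {y : ℝ≥0∞} {b r : ℝ} (hr : 0 < r) (hr1 : r < 1)
    (h : ENNReal.ofReal (r ^ b) ≤ y) :
    elog y * (((Real.log r)⁻¹ : ℝ) : EReal) ≤ (b : EReal) := by
  have hlr : Real.log r < 0 := Real.log_neg hr hr1
  have ht : (Real.log r)⁻¹ < 0 := inv_neg''.2 hlr
  have hy0 : y ≠ 0 := by
    intro hy; rw [hy, nonpos_iff_eq_zero, ENNReal.ofReal_eq_zero] at h
    exact absurd (Real.rpow_pos_of_pos hr b) (by simpa using h)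
  rcases eq_or_ne y ⊤ with rfl | hytop
  · rw [elog, if_neg (by simp), if_pos rfl, EReal.top_mul_of_neg (by exact_mod_cast ht)]
    exact bot_le
  · have hyt : 0 < y.toReal := ENNReal.toReal_pos hy0 hytop
    rw [elog, if_neg hy0, if_neg hytop, ← EReal.coe_mul, EReal.coe_le_coe_iff]
    have h1 : r ^ b ≤ y.toReal := by
      rw [ENNReal.ofReal_le_iff_le_toReal hytop] at h; exact h
    have h2 : b * Real.log r ≤ Real.log y.toReal := by
      calc b * Real.log r = Real.log (r ^ b) := (Real.log_rpow hr b).symm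
        _ ≤ Real.log y.toReal := Real.log_le_log (Real.rpow_pos_of_pos hr b) h1
    have h3 := mul_le_mul_of_nonpos_right h2 ht.le
    calc Real.log y.toReal * (Real.log r)⁻¹ ≤ b * Real.log r * (Real.log r)⁻¹ := h3
      _ = b := by
          rw [← div_eq_mul_inv, mul_div_assoc, div_self hlr.ne, mul_one]

lemma le_neg_of_forall_le {x y : EReal} (h : ∀ c : ℝ, (c:EReal) < y → x ≤ ((-c:ℝ):EReal)) :
    x ≤ -y := by
  induction y using EReal.rec with
  | bot => simp
  | top =>
      rw [EReal.neg_top, le_bot_iff]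
      by_contra hx
      obtain ⟨w, hw1, hw2⟩ := EReal.exists_between_coe_real (Ne.bot_lt hx)
      have h2 := h (-w) (EReal.coe_lt_top _)
      rw [neg_neg] at h2
      exact absurd hw2 (not_lt.2 h2)
  | coe y =>
      rw [← EReal.coe_neg, ← EReal.le_of_forall_lt_iff_le]
      intro z hz
      have hzy : ((-z : ℝ) : EReal) < (y : ℝ) := by
        rw [EReal.coe_lt_coe_iff] at hz ⊢; linarith
      simpa using h (-z) hzy

lemma eq_bot_of_forall_le {x : EReal} (h : ∀ c : ℝ, x ≤ (c:EReal)) : x = ⊥ := by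
  rw [EReal.eq_bot_iff_forall_lt]
  exact fun y => lt_of_le_of_lt (h (y-1)) (by exact_mod_cast sub_one_lt y)

lemma rpow_le_rpow_nonpos {a b : ℝ≥0∞} {q : ℝ} (hab : a ≤ b) (hq : q ≤ 0) : b ^ q ≤ a ^ q := by
  rw [← neg_neg q, ENNReal.rpow_neg b, ENNReal.rpow_neg a]
  exact ENNReal.inv_le_inv.2 (ENNReal.rpow_le_rpow hab (neg_nonneg.2 hq))

variable {d : ℕ} {μ : Measure (Euc d)}

lemma tsum_le_packSum {r : ℝ} {P : Set (Euc d)} (hP : IsPacking μ r P) (q : ℝ) :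
    ∑' x : P, μ (closedBall (x : Euc d) r) ^ q ≤ packSum μ q r := by
  rw [packSum]
  exact le_iSup₂ (f := fun (P : Set (Euc d)) (_ : IsPacking μ r P) =>
    ∑' x : P, μ (closedBall (x : Euc d) r) ^ q) P hP

lemma encard_le_packSum_zero {r : ℝ} {P : Set (Euc d)} (hP : IsPacking μ r P) :
    (P.encard : ℝ≥0∞) ≤ packSum μ 0 r := by
  rw [← ENNReal.tsum_set_one]
  refine le_trans (le_of_eq (tsum_congr fun x => ?_)) (tsum_le_packSum hP 0)
  exact (ENNReal.rpow_zero).symm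

lemma ldCount_le_packSum_zero (μ : Measure (Euc d)) (lo hi : ℝ≥0∞) (r : ℝ) :
    ldCount μ lo hi r ≤ packSum μ 0 r := by
  rw [ldCount]
  refine iSup₂_le fun P hP => ?_
  refine le_trans ?_ (encard_le_packSum_zero hP)
  exact_mod_cast ENat.toENNReal_le.2 (Set.encard_mono (Set.sep_subset _ _))

lemma single_le_packSum {x : Euc d} (hx : x ∈ msupp μ) (q r : ℝ) :
    μ (closedBall x r) ^ q ≤ packSum μ q r := by
  have hpack : IsPacking μ r {x} :=
    ⟨Set.singleton_subset_iff.2 hx, Set.pairwiseDisjoint_singleton _ _⟩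
  refine le_trans (le_of_eq ?_) (tsum_le_packSum hpack q)
  exact (tsum_singleton x fun y => μ (closedBall y r) ^ q).symm

lemma ldCount_le_mul {q A r : ℝ} (hq : q < 0) (hr : 0 < r) :
    ldCount μ 0 (ENNReal.ofReal (r ^ A)) r ≤ ENNReal.ofReal (r ^ (-(A*q))) * packSum μ q r := by
  rw [ldCount]
  refine iSup₂_le fun P hP => ?_
  set hh : ℝ≥0∞ := ENNReal.ofReal (r ^ A) with hhdef
  set cst : ℝ≥0∞ := ENNReal.ofReal (r ^ (-(A*q))) with hcstdef
  have hmul : A * (-q) = -(A*q) := by ring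
  have hcst_eq : cst = hh ^ (-q) := by
    rw [hcstdef, hhdef, ENNReal.ofReal_rpow_of_pos (Real.rpow_pos_of_pos hr A),
      ← Real.rpow_mul hr.le, hmul]
  set S := {x ∈ P | 0 ≤ μ (closedBall x r) ∧ μ (closedBall x r) ≤ hh} with hSdef
  have hS : S ⊆ P := Set.sep_subset _ _
  have hterm : ∀ x : S, (1:ℝ≥0∞) ≤ cst * μ (closedBall (x:Euc d) r) ^ q := by
    intro x
    have hxP : (x:Euc d) ∈ P := hS x.2
    have hle : μ (closedBall (x:Euc d) r) ≤ hh := x.2.2.2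
    have h0 : hh ≠ 0 := by
      simp only [hhdef, ne_eq, ENNReal.ofReal_eq_zero, not_le]
      exact Real.rpow_pos_of_pos hr A
    have htop : hh ≠ ⊤ := ENNReal.ofReal_ne_top
    have h1 : hh ^ q ≤ μ (closedBall (x:Euc d) r) ^ q := rpow_le_rpow_nonpos hle hq.le
    calc (1:ℝ≥0∞) = hh ^ (-q) * hh ^ q := by
          rw [← ENNReal.rpow_add (-q) q h0 htop, neg_add_cancel, ENNReal.rpow_zero]
      _ ≤ cst * μ (closedBall (x:Euc d) r) ^ q := by
          rw [hcst_eq]; exact mul_le_mul_right h1 _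
  calc ((S.encard : ℕ∞) : ℝ≥0∞) = ∑' _x : S, (1:ℝ≥0∞) := (ENNReal.tsum_set_one S).symm
    _ ≤ ∑' x : S, cst * μ (closedBall (x:Euc d) r) ^ q := ENNReal.tsum_le_tsum hterm
    _ ≤ ∑' x : P, cst * μ (closedBall (x:Euc d) r) ^ q := by
        rw [tsum_subtype S (fun y => cst * μ (closedBall y r) ^ q),
          tsum_subtype P (fun y => cst * μ (closedBall y r) ^ q)]
        exact ENNReal.tsum_le_tsum fun a =>
          Set.indicator_le_indicator_of_subset hS (fun _ => zero_le) a
    _ = cst * ∑' x : P, μ (closedBall (x:Euc d) r) ^ q := ENNReal.tsum_mul_left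
    _ ≤ cst * packSum μ q r := mul_le_mul_right (tsum_le_packSum hP q) _

lemma ev_lt_one : ∀ᶠ r : ℝ in 𝓝[>] 0, r < 1 :=
  Eventually.filter_mono nhdsWithin_le_nhds (gt_mem_nhds one_pos)

lemma ev_packSum_le {q c : ℝ} (hc : (c:EReal) < tauLow μ q) :
    ∀ᶠ r : ℝ in 𝓝[>] 0, 0 < r ∧ r < 1 ∧ packSum μ q r ≤ ENNReal.ofReal (r ^ c) := by
  rw [tauLow] at hc
  filter_upwards [eventually_lt_of_lt_liminf hc, eventually_mem_nhdsWithin, ev_lt_one]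
    with r h1 hr hr1
  exact ⟨hr, hr1, key_ev hr hr1 h1⟩

lemma fLDup_le_neg_tau0 : fLDup μ ⊤ ≤ - tauLow μ 0 := by
  rw [fLDup, if_pos rfl]
  refine le_trans (iInf_le _ (1:ℝ)) ?_
  apply le_neg_of_forall_le
  intro c hc
  refine limsup_le_of_le (by isBoundedDefault) ?_
  filter_upwards [ev_packSum_le (q := 0) hc] with r hr
  obtain ⟨hr0, hr1, hps⟩ := hr
  have hcount : ldCount μ 0 (ENNReal.ofReal (r ^ (1:ℝ))) r ≤ ENNReal.ofReal (r ^ c) :=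
    le_trans (ldCount_le_packSum_zero μ _ _ r) hps
  exact key_fwd hr0 hr1 hcount

lemma fLDup_eq_bot {q : ℝ} (hq : q < 0) (hτ : tauLow μ q ≠ ⊥) : fLDup μ ⊤ = ⊥ := by
  obtain ⟨c, -, hc⟩ := EReal.exists_between_coe_real (Ne.bot_lt hτ)
  have hA : ∀ A : ℝ, fLDup μ ⊤ ≤ ((A*q - c : ℝ) : EReal) := by
    intro A
    rw [fLDup, if_pos rfl]
    refine le_trans (iInf_le _ A) ?_
    refine limsup_le_of_le (by isBoundedDefault) ?_
    filter_upwards [ev_packSum_le hc] with r hr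
    obtain ⟨hr0, hr1, hps⟩ := hr
    have hcount : ldCount μ 0 (ENNReal.ofReal (r ^ A)) r ≤ ENNReal.ofReal (r ^ (-(A*q) + c)) := by
      refine le_trans (ldCount_le_mul hq hr0) ?_
      calc ENNReal.ofReal (r ^ (-(A*q))) * packSum μ q r
          ≤ ENNReal.ofReal (r ^ (-(A*q))) * ENNReal.ofReal (r ^ c) := mul_le_mul_right hps _
        _ = ENNReal.ofReal (r ^ (-(A*q) + c)) := by
            rw [← ENNReal.ofReal_mul (Real.rpow_pos_of_pos hr0 _).le, ← Real.rpow_add hr0]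
    have := key_fwd hr0 hr1 hcount
    have heq : -(-(A*q) + c) = A*q - c := by ring
    rwa [heq] at this
  apply eq_bot_of_forall_le
  intro M
  have := hA ((M + c) / q)
  rwa [div_mul_cancel₀ _ hq.ne, add_sub_cancel_right] at this

lemma tauLow_zero_nonpos {x : Euc d} (hx : x ∈ msupp μ) : tauLow μ 0 ≤ 0 := by
  have hev : ∀ᶠ r : ℝ in 𝓝[>] 0,
      elog (packSum μ 0 r) * (((Real.log r)⁻¹:ℝ):EReal) ≤ ((0:ℝ):EReal) := by
    filter_upwards [eventually_mem_nhdsWithin, ev_lt_one] with r hr hr1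
    refine key_rev hr hr1 ?_
    have h1 : μ (closedBall x r) ^ (0:ℝ) ≤ packSum μ 0 r := single_le_packSum hx 0 r
    rw [ENNReal.rpow_zero] at h1
    simpa [Real.rpow_zero, ENNReal.ofReal_one] using h1
  have : tauLow μ 0 ≤ ((0:ℝ):EReal) := by
    rw [tauLow]
    exact liminf_le_of_frequently_le hev.frequently
  simpa using this

lemma Epoint_top_empty {q : ℝ} (hq : q < 0) (hτ : tauLow μ q ≠ ⊥) : Epoint μ ⊤ = ∅ := by
  ext x
  simp only [Epoint, Eab, Set.mem_sep_iff, Set.mem_empty_iff_false, iff_false, not_and]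
  intro hxsupp hlow _
  have key : ∀ A : ℝ, tauLow μ q ≤ ((A*q : ℝ) : EReal) := by
    intro A
    have hAdim : (A : EReal) < dLow μ x := by rw [hlow]; exact EReal.coe_lt_top A
    rw [dLow] at hAdim
    have hev := eventually_lt_of_lt_liminf hAdim
    rw [tauLow]
    refine liminf_le_of_frequently_le (Eventually.frequently ?_)
    filter_upwards [hev, eventually_mem_nhdsWithin, ev_lt_one] with r h1 hr hr1
    have hball : μ (closedBall x r) ≤ ENNReal.ofReal (r ^ A) := key_ev hr hr1 h1
    have h2 : ENNReal.ofReal (r ^ (A*q)) ≤ packSum μ q r := by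
      refine le_trans ?_ (single_le_packSum hxsupp q r)
      calc ENNReal.ofReal (r ^ (A*q)) = (ENNReal.ofReal (r ^ A)) ^ q := by
            rw [ENNReal.ofReal_rpow_of_pos (Real.rpow_pos_of_pos hr A), ← Real.rpow_mul hr.le]
        _ ≤ μ (closedBall x r) ^ q := rpow_le_rpow_nonpos hball hq.le
    exact key_rev hr hr1 h2
  have hbot : tauLow μ q = ⊥ := by
    apply eq_bot_of_forall_le
    intro M
    have := key (M / q)
    rwa [div_mul_cancel₀ _ hq.ne] at this
  exact absurd hbot hτ

end St14

namespace St14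

variable {d : ℕ} {μ : Measure (Euc d)}

lemma exists_cover {r c : ℝ} (hr : 0 < r) (h : packSum μ 0 r ≤ ENNReal.ofReal (r ^ c)) :
    ∃ P : Finset (Euc d), ((P.card : ℝ≥0∞) ≤ ENNReal.ofReal (r ^ c) ∧
      msupp μ ⊆ ⋃ i : ↥P, closedBall (i : Euc d) (2 * r)) := by
  have hbound : ∀ Q : Set (Euc d), IsPacking μ r Q →
      ((Q.encard : ℕ∞) : ℝ≥0∞) ≤ ENNReal.ofReal (r ^ c) :=
    fun Q hQ => le_trans (encard_le_packSum_zero hQ) h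
  have hnat : ∀ n : ℕ, ∀ Q : Set (Euc d), IsPacking μ r Q → Q.encard = (n : ℕ∞) →
      n ≤ Nat.ceil (r ^ c) := by
    intro n Q hQ hn
    have h1 := hbound Q hQ
    rw [hn] at h1
    have h2 : ((n : ℕ) : ℝ≥0∞) ≤ ENNReal.ofReal (r ^ c) := by exact_mod_cast h1
    have h3 : ((n : ℕ) : ℝ) ≤ r ^ c := by
      have h4 := ENNReal.toReal_mono ENNReal.ofReal_ne_top h2
      rwa [ENNReal.toReal_natCast, ENNReal.toReal_ofReal (Real.rpow_nonneg hr.le c)] at h4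
    exact_mod_cast h3.trans (Nat.le_ceil _)
  have hfin : ∀ Q : Set (Euc d), IsPacking μ r Q → ∃ n : ℕ, Q.encard = (n : ℕ∞) := by
    intro Q hQ
    have hne : Q.encard ≠ ⊤ := by
      intro htop
      have h2 := hbound Q hQ
      rw [htop] at h2
      simp only [ENat.toENNReal_top, top_le_iff] at h2
      exact ENNReal.ofReal_ne_top h2
    exact WithTop.ne_top_iff_exists.1 hne |>.imp fun n hn => hn.symm
  set T : Set ℕ := {n : ℕ | ∃ Q : Set (Euc d), IsPacking μ r Q ∧ Q.encard = (n : ℕ∞)} with hT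
  have hT0 : 0 ∈ T :=
    ⟨∅, ⟨Set.empty_subset _, Set.pairwiseDisjoint_empty⟩, by simp⟩
  have hTbdd : BddAbove T := ⟨Nat.ceil (r ^ c), fun n hn => by
    obtain ⟨Q, h1, h2⟩ := hn; exact hnat n Q h1 h2⟩
  obtain ⟨Q, hQ, hQcard⟩ := Nat.sSup_mem ⟨0, hT0⟩ hTbdd
  have hQfin : Q.Finite := Set.encard_ne_top_iff.1 (by rw [hQcard]; exact WithTop.coe_ne_top)
  refine ⟨hQfin.toFinset, ?_, ?_⟩
  · have h1 := hbound Q hQ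
    rw [hQfin.encard_eq_coe_toFinset_card] at h1
    exact_mod_cast h1
  · intro y hy
    by_contra hyc
    have hdist : ∀ x ∈ Q, 2 * r < dist y x := by
      intro x hx
      by_contra hd
      push_neg at hd
      exact hyc (Set.mem_iUnion.2 ⟨⟨x, hQfin.mem_toFinset.2 hx⟩, Metric.mem_closedBall.2 hd⟩)
    have hyQ : y ∉ Q := by
      intro hyQ
      have h5 := hdist y hyQ
      rw [dist_self] at h5
      linarith
    have hpack : IsPacking μ r (insert y Q) := by
      refine ⟨Set.insert_subset hy hQ.1, hQ.2.insert fun x hx _ => ?_⟩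
      exact closedBall_disjoint_closedBall (by have := hdist x hx; linarith)
    have hmem : sSup T + 1 ∈ T :=
      ⟨insert y Q, hpack, by
        rw [Set.encard_insert_of_notMem hyQ, hQcard]; exact_mod_cast rfl⟩
    have h6 := le_csSup hTbdd hmem
    omega

set_option maxHeartbeats 2000000 in
lemma dimH_supp_le {c : ℝ} (hc0 : c < 0) (hc : (c:EReal) < tauLow μ 0) :
    dimH (msupp μ) ≤ ENNReal.ofReal (-c) := by
  refine dimH_le fun d' hd' => ?_
  by_contra hlt
  rw [not_le] at hlt
  set s : ℝ := ((d' : ℝ≥0) : ℝ) with hs_def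
  have hs_nonneg : 0 ≤ s := d'.coe_nonneg
  have hd'c : -c < s := by
    have h1 := (ENNReal.ofReal_lt_iff_lt_toReal (by linarith) ENNReal.coe_ne_top).1 hlt
    simpa using h1
  have hcs : 0 < c + s := by linarith
  set u : ℕ → ℝ := fun n => (1/2 : ℝ) ^ n with hu_def
  have hu_pos : ∀ n, 0 < u n := fun n => pow_pos (by norm_num) n
  have hu_tend : Tendsto u atTop (𝓝 0) :=
    tendsto_pow_atTop_nhds_zero_of_lt_one (by norm_num) (by norm_num)
  have hu_tend' : Tendsto u atTop (𝓝[>] 0) :=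
    tendsto_nhdsWithin_of_tendsto_nhds_of_eventually_within _ hu_tend
      (Eventually.of_forall fun n => hu_pos n)
  have hev : ∀ᶠ n in atTop,
      0 < u n ∧ u n < 1 ∧ packSum μ 0 (u n) ≤ ENNReal.ofReal (u n ^ c) :=
    hu_tend'.eventually (ev_packSum_le hc)
  have hex : ∀ n : ℕ, ∃ P : Finset (Euc d),
      ((0 < u n ∧ u n < 1 ∧ packSum μ 0 (u n) ≤ ENNReal.ofReal (u n ^ c)) →
        ((P.card : ℝ≥0∞) ≤ ENNReal.ofReal (u n ^ c) ∧
          msupp μ ⊆ ⋃ i : ↥P, closedBall (i : Euc d) (2 * u n))) := by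
    intro n
    by_cases hn : 0 < u n ∧ u n < 1 ∧ packSum μ 0 (u n) ≤ ENNReal.ofReal (u n ^ c)
    · obtain ⟨P, h1, h2⟩ := exists_cover hn.1 hn.2.2
      exact ⟨P, fun _ => ⟨h1, h2⟩⟩
    · exact ⟨∅, fun hcon => absurd hcon hn⟩
  choose P hP using hex
  have hdiam0 : ∀ n : ℕ, ∀ x : Euc d,
      EMetric.diam (closedBall x (2 * u n)) ≤ ENNReal.ofReal (4 * u n) := by
    intro n x
    have h2 : (0:ℝ) ≤ 2 * u n := by have := hu_pos n; linarith
    rw [← Metric.emetric_closedBall h2]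
    refine le_trans EMetric.diam_closedBall ?_
    rw [show ((2:ℝ≥0∞)) = ENNReal.ofReal (2:ℝ) by simp,
      ← ENNReal.ofReal_mul (by norm_num)]
    exact ENNReal.ofReal_le_ofReal (by linarith)
  have hH1 : Tendsto (fun n => ENNReal.ofReal (4 * u n)) atTop (𝓝 0) := by
    have h1 := hu_tend.const_mul (4:ℝ)
    rw [mul_zero] at h1
    have h5 := ENNReal.tendsto_ofReal h1
    rwa [ENNReal.ofReal_zero] at h5
  have hH2 : ∀ᶠ n in atTop, ∀ i : ↥(P n),
      EMetric.diam (closedBall (i : Euc d) (2 * u n)) ≤ ENNReal.ofReal (4 * u n) :=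
    Eventually.of_forall fun n i => hdiam0 n i
  have hH3 : ∀ᶠ n in atTop, msupp μ ⊆ ⋃ i : ↥(P n), closedBall (i : Euc d) (2 * u n) := by
    filter_upwards [hev] with n hn
    exact (hP n hn).2
  have hμH : μH[s] (msupp μ) ≤
      liminf (fun n => ∑ i : ↥(P n), EMetric.diam (closedBall (i : Euc d) (2 * u n)) ^ s) atTop :=
    MeasureTheory.Measure.hausdorffMeasure_le_liminf_sum (ι := fun n => ↥(P n)) s (msupp μ)
      (fun n => ENNReal.ofReal (4 * u n)) hH1 (fun n i => closedBall (i : Euc d) (2 * u n)) hH2 hH3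
  have hbnd : ∀ᶠ n in atTop,
      (∑ i : ↥(P n), EMetric.diam (closedBall (i : Euc d) (2 * u n)) ^ s)
        ≤ ENNReal.ofReal (u n ^ c * (4 * u n) ^ s) := by
    filter_upwards [hev] with n hn
    have hdiam : ∀ i : ↥(P n),
        EMetric.diam (closedBall (i : Euc d) (2 * u n)) ^ s ≤ (ENNReal.ofReal (4 * u n)) ^ s :=
      fun i => ENNReal.rpow_le_rpow (hdiam0 n i) hs_nonneg
    calc (∑ i : ↥(P n), EMetric.diam (closedBall (i : Euc d) (2 * u n)) ^ s)
        ≤ ∑ _i : ↥(P n), (ENNReal.ofReal (4 * u n)) ^ s :=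
          Finset.sum_le_sum fun i _ => hdiam i
      _ = ((P n).card : ℝ≥0∞) * (ENNReal.ofReal (4 * u n)) ^ s := by
          rw [Finset.sum_const, Finset.card_univ, Fintype.card_coe, nsmul_eq_mul]
      _ ≤ ENNReal.ofReal (u n ^ c) * (ENNReal.ofReal (4 * u n)) ^ s :=
          mul_le_mul_left (hP n hn).1 _
      _ = ENNReal.ofReal (u n ^ c * (4 * u n) ^ s) := by
          rw [ENNReal.ofReal_rpow_of_pos (show (0:ℝ) < 4 * u n by have := hu_pos n; linarith),
            ← ENNReal.ofReal_mul (Real.rpow_nonneg (hu_pos n).le c)]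
  have htend0 : Tendsto (fun n => ENNReal.ofReal (u n ^ c * (4 * u n) ^ s)) atTop (𝓝 0) := by
    have hre : Tendsto (fun n => (4:ℝ) ^ s * u n ^ (c + s)) atTop (𝓝 0) := by
      have h1 : Tendsto (fun x : ℝ => x ^ (c + s)) (𝓝 0) (𝓝 0) := by
        have h2 := (Real.continuousAt_rpow_const 0 (c + s) (Or.inr hcs.le)).tendsto
        rwa [Real.zero_rpow hcs.ne'] at h2
      have h3 : Tendsto (fun n => u n ^ (c + s)) atTop (𝓝 0) := h1.comp hu_tend
      simpa using h3.const_mul ((4:ℝ) ^ s)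
    have heq : ∀ n : ℕ, u n ^ c * (4 * u n) ^ s = (4:ℝ) ^ s * u n ^ (c + s) := by
      intro n
      rw [Real.mul_rpow (by norm_num) (hu_pos n).le,
        show u n ^ c * ((4:ℝ) ^ s * u n ^ s) = (4:ℝ) ^ s * (u n ^ c * u n ^ s) by ring,
        ← Real.rpow_add (hu_pos n)]
    have h4 : Tendsto (fun n => u n ^ c * (4 * u n) ^ s) atTop (𝓝 0) := by
      simpa only [heq] using hre
    have h5 := ENNReal.tendsto_ofReal h4
    simpa using h5
  have hzero : μH[s] (msupp μ) = 0 := by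
    have h1 : liminf (fun n => ∑ i : ↥(P n),
        EMetric.diam (closedBall (i : Euc d) (2 * u n)) ^ s) atTop ≤
        liminf (fun n => ENNReal.ofReal (u n ^ c * (4 * u n) ^ s)) atTop :=
      liminf_le_liminf hbnd
    rw [htend0.liminf_eq] at h1
    exact le_antisymm (hμH.trans h1) zero_le
  rw [hzero] at hd'
  exact absurd hd' (by simp)

lemma dimHE_le_neg_tau0 : dimHE (Epoint μ ⊤) ≤ - tauLow μ 0 := by
  rw [dimHE]
  split_ifs with hE
  · exact bot_le
  · obtain ⟨x₀, hx₀⟩ := Set.nonempty_iff_ne_empty.2 hE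
    have hx₀s : x₀ ∈ msupp μ := hx₀.1
    have hτ0 : tauLow μ 0 ≤ 0 := tauLow_zero_nonpos hx₀s
    apply le_neg_of_forall_le
    intro c hc
    have hc0 : c < 0 := by
      have h1 := lt_of_lt_of_le hc hτ0
      exact_mod_cast h1
    have hdim : dimH (Epoint μ ⊤) ≤ ENNReal.ofReal (-c) :=
      le_trans (dimH_mono fun x hx => hx.1) (dimH_supp_le hc0 hc)
    calc ((dimH (Epoint μ ⊤) : ℝ≥0∞) : EReal)
        ≤ ((ENNReal.ofReal (-c) : ℝ≥0∞) : EReal) := by exact_mod_cast hdim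
      _ = ((-c : ℝ) : EReal) := by
          rw [EReal.coe_ennreal_ofReal, max_eq_left (by linarith)]

end St14

/-- part of (1.3) at `α = ∞`: `f̄^LD_μ(∞) ≤ τ_μ*(∞)` and
`dim_H E(μ,∞) ≤ τ_μ*(∞)`, explicitly in the two possible cases for `dom τ_μ`. -/
theorem statement14 (d : ℕ) (hd : 1 ≤ d) (μ : Measure (Euc d)) (hμ : McPlus μ) :
    fLDup μ ⊤ ≤ eLegendre (tauLow μ) ⊤ ∧
    dimHE (Epoint μ ⊤) ≤ eLegendre (tauLow μ) ⊤ ∧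
    ({q : ℝ | tauLow μ q ≠ ⊥} = Set.univ → fLDup μ ⊤ = ⊥ ∧ Epoint μ ⊤ = ∅) ∧
    ({q : ℝ | tauLow μ q ≠ ⊥} = Set.Ici 0 →
      fLDup μ ⊤ ≤ -tauLow μ 0 ∧ dimHE (Epoint μ ⊤) ≤ -tauLow μ 0) := by
  have hval : ∀ q : ℝ, q = 0 →
      (⊤ : EReal) * (q : EReal) - tauLow μ q = - tauLow μ 0 := by
    intro q hq
    subst hq
    rw [show ((0:ℝ):EReal) = (0:EReal) by simp, mul_zero, zero_sub]
  refine ⟨?_, ?_, ?_, ?_⟩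
  · rw [eLegendre]
    refine le_sInf fun v hv => ?_
    obtain ⟨q, hq, hq0, rfl⟩ := hv
    rcases lt_or_eq_of_le (hq0 rfl) with hlt | heq
    · rw [St14.fLDup_eq_bot hlt hq]; exact bot_le
    · rw [hval q heq]
      exact St14.fLDup_le_neg_tau0
  · rw [eLegendre]
    refine le_sInf fun v hv => ?_
    obtain ⟨q, hq, hq0, rfl⟩ := hv
    rcases lt_or_eq_of_le (hq0 rfl) with hlt | heq
    · rw [St14.Epoint_top_empty hlt hq, dimHE, if_pos rfl]; exact bot_le
    · rw [hval q heq]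
      exact St14.dimHE_le_neg_tau0
  · intro hdom
    have hne : tauLow μ (-1) ≠ ⊥ := by
      have h1 : (-1:ℝ) ∈ {q : ℝ | tauLow μ q ≠ ⊥} := by rw [hdom]; exact Set.mem_univ _
      exact h1
    exact ⟨St14.fLDup_eq_bot (by norm_num) hne, St14.Epoint_top_empty (by norm_num) hne⟩
  · intro _
    exact ⟨St14.fLDup_le_neg_tau0, St14.dimHE_le_neg_tau0⟩

end
end

section
/- Let d ≥ 1, μ ∈ M_c^+(ℝ^d), and α ∈ [0,∞]. Let G_α = {x ∈ supp(μ) : there exists a strictly increasing sequence of integers (n_j) with lim_{j→∞} log μ(B(x,2^{−n_j}))/log(2^{−n_j}) = α}. Then dim_H G_α ≤ f̄^LD_μ(α), with the convention dim_H ∅ = −∞. -/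
open MeasureTheory Metric Set Filter Topology
open scoped ENNReal NNReal

noncomputable section

section AuxProofs
set_option maxHeartbeats 1000000

lemma helper1 {m : ℝ≥0∞} {r a b : ℝ} (hr0 : 0 < r) (hr1 : r < 1)
    (h1 : (a : EReal) < elog m * (((Real.log r)⁻¹ : ℝ) : EReal))
    (h2 : elog m * (((Real.log r)⁻¹ : ℝ) : EReal) < (b : EReal)) :
    ENNReal.ofReal (r ^ b) ≤ m ∧ m ≤ ENNReal.ofReal (r ^ a) := by
  have hlog : Real.log r < 0 := Real.log_neg hr0 hr1
  have hc : (Real.log r)⁻¹ < 0 := inv_neg''.2 hlog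
  rcases eq_or_ne m 0 with rfl | hm0
  · exfalso
    rw [elog, if_pos rfl, EReal.bot_mul_coe_of_neg hc] at h2
    exact (not_top_lt h2)
  rcases eq_or_ne m ⊤ with rfl | hmt
  · exfalso
    rw [elog, if_neg (by simp), if_pos rfl, EReal.top_mul_coe_of_neg hc] at h1
    exact (not_lt_bot h1)
  set L := Real.log m.toReal with hL
  have helog : elog m = (L : EReal) := by rw [elog, if_neg hm0, if_neg hmt]
  rw [helog, ← EReal.coe_mul, EReal.coe_lt_coe_iff] at h1 h2
  have hmtR : 0 < m.toReal := ENNReal.toReal_pos hm0 hmt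
  have h1' : L < a * Real.log r := by
    have := mul_lt_mul_of_neg_right h1 hlog
    rwa [mul_assoc, inv_mul_cancel₀ (ne_of_lt hlog), mul_one] at this
  have h2' : b * Real.log r < L := by
    have := mul_lt_mul_of_neg_right h2 hlog
    rwa [mul_assoc, inv_mul_cancel₀ (ne_of_lt hlog), mul_one] at this
  have e1 : m.toReal < r ^ a := by
    have := Real.exp_lt_exp.2 h1'
    rwa [Real.exp_log hmtR, mul_comm, ← Real.rpow_def_of_pos hr0] at this
  have e2 : r ^ b < m.toReal := by
    have := Real.exp_lt_exp.2 h2'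
    rwa [Real.exp_log hmtR, mul_comm, ← Real.rpow_def_of_pos hr0] at this
  constructor
  · rw [← ENNReal.ofReal_toReal hmt]
    exact ENNReal.ofReal_le_ofReal e2.le
  · rw [← ENNReal.ofReal_toReal hmt]
    exact ENNReal.ofReal_le_ofReal e1.le

lemma helper2 {m : ℝ≥0∞} {r A : ℝ} (hr0 : 0 < r) (hr1 : r < 1) (hmt : m ≠ ⊤)
    (h1 : (A : EReal) < elog m * (((Real.log r)⁻¹ : ℝ) : EReal)) :
    m ≤ ENNReal.ofReal (r ^ A) := by
  have hlog : Real.log r < 0 := Real.log_neg hr0 hr1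
  have hc : (Real.log r)⁻¹ < 0 := inv_neg''.2 hlog
  rcases eq_or_ne m 0 with rfl | hm0
  · exact zero_le
  set L := Real.log m.toReal with hL
  have helog : elog m = (L : EReal) := by rw [elog, if_neg hm0, if_neg hmt]
  rw [helog, ← EReal.coe_mul, EReal.coe_lt_coe_iff] at h1
  have hmtR : 0 < m.toReal := ENNReal.toReal_pos hm0 hmt
  have h1' : L < A * Real.log r := by
    have := mul_lt_mul_of_neg_right h1 hlog
    rwa [mul_assoc, inv_mul_cancel₀ (ne_of_lt hlog), mul_one] at this
  have e1 : m.toReal < r ^ A := by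
    have := Real.exp_lt_exp.2 h1'
    rwa [Real.exp_log hmtR, mul_comm, ← Real.rpow_def_of_pos hr0] at this
  rw [← ENNReal.ofReal_toReal hmt]
  exact ENNReal.ofReal_le_ofReal e1.le

-- helper3 : from elog N * (-log r)⁻¹ < s conclude N ≤ ofReal (r ^ (-s))
lemma helper3 {N : ℝ≥0∞} {r s : ℝ} (hr0 : 0 < r) (hr1 : r < 1)
    (h : elog N * (((-Real.log r)⁻¹ : ℝ) : EReal) < (s : EReal)) :
    N ≤ ENNReal.ofReal (r ^ (-s)) := by
  have hlog : Real.log r < 0 := Real.log_neg hr0 hr1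
  have hc : (0:ℝ) < (-Real.log r)⁻¹ := inv_pos.2 (by linarith)
  rcases eq_or_ne N 0 with rfl | hN0
  · exact zero_le
  rcases eq_or_ne N ⊤ with rfl | hNt
  · exfalso
    rw [elog, if_neg (by simp), if_pos rfl, EReal.top_mul_coe_of_pos hc] at h
    exact (not_top_lt h)
  set L := Real.log N.toReal with hL
  have helog : elog N = (L : EReal) := by rw [elog, if_neg hN0, if_neg hNt]
  rw [helog, ← EReal.coe_mul, EReal.coe_lt_coe_iff] at h
  have hNtR : 0 < N.toReal := ENNReal.toReal_pos hN0 hNt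
  have h1' : L < (-s) * Real.log r := by
    have := mul_lt_mul_of_pos_right h (by linarith : (0:ℝ) < -Real.log r)
    rw [mul_assoc, inv_mul_cancel₀ (by linarith : -Real.log r ≠ 0), mul_one] at this
    nlinarith [this]
  have e1 : N.toReal < r ^ (-s) := by
    have := Real.exp_lt_exp.2 h1'
    rwa [Real.exp_log hNtR, mul_comm, ← Real.rpow_def_of_pos hr0] at this
  rw [← ENNReal.ofReal_toReal hNt]
  exact ENNReal.ofReal_le_ofReal e1.le


lemma sep_cover {X : Type*} [MetricSpace X] [TopologicalSpace.SeparableSpace X]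
    (S : Set X) {r : ℝ} (hr : 0 < r) :
    ∃ T ⊆ S, (∀ a ∈ T, ∀ b ∈ T, a ≠ b → 2 * r < dist a b) ∧
      (∀ x ∈ S, ∃ t ∈ T, x ∈ closedBall t (2 * r)) ∧ T.Countable := by
  set 𝒜 : Set (Set X) := {T | T ⊆ S ∧ ∀ a ∈ T, ∀ b ∈ T, a ≠ b → 2 * r < dist a b}
  obtain ⟨T, hT⟩ : ∃ T, Maximal (· ∈ 𝒜) T := by
    apply zorn_subset
    intro c hc hchain
    refine ⟨⋃₀ c, ⟨?_, ?_⟩, fun s hs => subset_sUnion_of_mem hs⟩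
    · exact sUnion_subset fun s hs => (hc hs).1
    · rintro a ⟨sa, hsa, ha⟩ b ⟨sb, hsb, hb⟩ hab
      rcases hchain.total hsa hsb with h | h
      · exact (hc hsb).2 a (h ha) b hb hab
      · exact (hc hsa).2 a ha b (h hb) hab
  obtain ⟨⟨hTS, hsep⟩, hmax⟩ := hT
  refine ⟨T, hTS, hsep, ?_, ?_⟩
  · intro x hx
    by_contra hcon
    push_neg at hcon
    have hxT : x ∉ T := fun h => by
      have := hcon x h; simp [Metric.mem_closedBall, dist_self] at this; linarith
    have hmem : insert x T ∈ 𝒜 := by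
      refine ⟨insert_subset hx hTS, ?_⟩
      rintro a (rfl | ha) b (rfl | hb) hab
      · exact absurd rfl hab
      · have := hcon b hb
        rw [Metric.mem_closedBall] at this
        push_neg at this
        exact this
      · have := hcon a ha
        rw [Metric.mem_closedBall] at this
        push_neg at this
        rwa [dist_comm] at this
      · exact hsep a ha b hb hab
    exact hxT (hmax hmem (subset_insert x T) (mem_insert x T))
  · apply Set.PairwiseDisjoint.countable_of_nonempty_interior
      (s := fun x => closedBall x r) (a := T)
    · intro a ha b hb hab
      exact closedBall_disjoint_closedBall (by have := hsep a ha b hb hab; linarith)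
    · intro t _
      exact ⟨t, mem_interior.2 ⟨ball t r, ball_subset_closedBall, isOpen_ball,
        mem_ball_self hr⟩⟩


lemma tsum_shift_of_vanish {f : ℕ → ENNReal} {M : ℕ} (h : ∀ n < M, f n = 0) :
    ∑' n, f n = ∑' k, f (k + M) := by
  refine tsum_eq_tsum_of_ne_zero_bij (f := f) (g := fun k => f (k + M))
    (fun k => (k : ℕ) + M) ?_ ?_ ?_
  · intro a b hab
    have : (a : ℕ) + M = (b : ℕ) + M := hab
    exact Subtype.ext (by omega)
  · intro n hn
    have hM : M ≤ n := by
      by_contra hc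
      exact hn (h n (by omega))
    refine ⟨⟨n - M, ?_⟩, by simp; omega⟩
    show f ((n - M) + M) ≠ 0
    rwa [Nat.sub_add_cancel hM]
  · intro x; rfl


lemma key {d : ℕ} (μ : Measure (Euc d)) (G : Set (Euc d)) (hGsupp : G ⊆ msupp μ)
    (lo hi : ℕ → ℝ≥0∞) {s c : ℝ} (hs : 0 < s) (hsc : s < c)
    (hG : ∀ x ∈ G, ∃ᶠ n in atTop,
        lo n ≤ μ (closedBall x ((2:ℝ) ^ (-(n:ℝ)))) ∧ μ (closedBall x ((2:ℝ) ^ (-(n:ℝ)))) ≤ hi n)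
    (hcount : ∀ᶠ n in atTop, ldCount μ (lo n) (hi n) ((2:ℝ) ^ (-(n:ℝ))) ≤
        ENNReal.ofReal (((2:ℝ) ^ (-(n:ℝ))) ^ (-s))) :
    dimH G ≤ ENNReal.ofReal c := by
  set rn : ℕ → ℝ := fun n => (2:ℝ) ^ (-(n:ℝ)) with hrn
  have hrnpos : ∀ n, 0 < rn n := fun n => Real.rpow_pos_of_pos two_pos _
  have hrnanti : ∀ {M n : ℕ}, M ≤ n → rn n ≤ rn M := by
    intro M n h
    exact Real.rpow_le_rpow_of_exponent_le one_le_two (by exact_mod_cast neg_le_neg (by exact_mod_cast h))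
  -- the sets S n and maximal separated subsets T n
  set S : ℕ → Set (Euc d) := fun n =>
    {x ∈ G | lo n ≤ μ (closedBall x (rn n)) ∧ μ (closedBall x (rn n)) ≤ hi n} with hS
  have hsc' : ∀ n, ∃ T ⊆ S n, (∀ a ∈ T, ∀ b ∈ T, a ≠ b → 2 * rn n < dist a b) ∧
      (∀ x ∈ S n, ∃ t ∈ T, x ∈ closedBall t (2 * rn n)) ∧ T.Countable :=
    fun n => sep_cover (S n) (hrnpos n)
  choose T hTS hTsep hTcov hTcount using hsc'
  have hpack : ∀ n, IsPacking μ (rn n) (T n) := by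
    intro n
    refine ⟨fun x hx => hGsupp ((hTS n hx).1), ?_⟩
    intro a ha b hb hab
    exact closedBall_disjoint_closedBall (by have := hTsep n a ha b hb hab; linarith)
  have hTcard : ∀ n, (T n).encard ≤ ldCount μ (lo n) (hi n) (rn n) := by
    intro n
    have : {x ∈ T n | lo n ≤ μ (closedBall x (rn n)) ∧ μ (closedBall x (rn n)) ≤ hi n} = T n := by
      ext x; simp only [mem_setOf_eq, and_iff_left_iff_imp]
      exact fun hx => (hTS n hx).2
    have h2 : ((({x ∈ T n | lo n ≤ μ (closedBall x (rn n)) ∧ μ (closedBall x (rn n)) ≤ hi n}).encard : ℕ∞) : ℝ≥0∞) ≤ ldCount μ (lo n) (hi n) (rn n) :=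
      le_iSup₂ (f := fun (P : Set (Euc d)) (_ : IsPacking μ (rn n) P) =>
        ((({x ∈ P | lo n ≤ μ (closedBall x (rn n)) ∧ μ (closedBall x (rn n)) ≤ hi n}).encard : ℕ∞) : ℝ≥0∞)) (T n) (hpack n)
    rwa [this] at h2
  haveI : ∀ n, Countable (T n) := fun n => (hTcount n).to_subtype
  haveI : ∀ M : ℕ, Countable ((n : ℕ) × (T n)) := fun _ => inferInstance
  -- covering families
  set t : ℕ → ((n : ℕ) × (T n)) → Set (Euc d) := fun M p =>
    if M ≤ p.1 then closedBall (p.2 : Euc d) (2 * rn p.1) else ∅ with ht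
  have hdiam : ∀ (M : ℕ) (p : (n : ℕ) × (T n)),
      EMetric.diam (t M p) ≤ ENNReal.ofReal (4 * rn p.1) := by
    intro M p
    rw [ht]
    dsimp only
    split
    · rw [show (4 : ℝ) * rn p.1 = 2 * (2 * rn p.1) by ring,
        ENNReal.ofReal_mul (by norm_num : (0:ℝ) ≤ 2), ENNReal.ofReal_ofNat,
        ← Metric.emetric_closedBall (by positivity : (0:ℝ) ≤ 2 * rn p.1)]
      exact EMetric.diam_closedBall
    · simp [show EMetric.diam (∅ : Set (Euc d)) = 0 from Metric.ediam_empty]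
  have hcov : μH[c] G ≤
      liminf (fun M => ∑' p : (n : ℕ) × (T n), EMetric.diam (t M p) ^ c) atTop := by
    apply MeasureTheory.Measure.hausdorffMeasure_le_liminf_tsum c G (fun M => ENNReal.ofReal (4 * rn M))
    · -- tendsto 0
      rw [show (0:ℝ≥0∞) = ENNReal.ofReal (4 * 0) by simp]
      apply ENNReal.tendsto_ofReal
      apply Tendsto.const_mul
      have : ∀ n : ℕ, rn n = ((2:ℝ)⁻¹) ^ n := by
        intro n
        show (2:ℝ) ^ (-(n:ℝ)) = ((2:ℝ)⁻¹) ^ n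
        rw [Real.rpow_neg (by norm_num : (0:ℝ) ≤ 2), Real.rpow_natCast, inv_pow]
      rw [show rn = _ from funext this]
      exact tendsto_pow_atTop_nhds_zero_of_lt_one (by norm_num) (by norm_num)
    · -- diam bound
      filter_upwards with M
      intro p
      by_cases h : M ≤ p.1
      · exact le_trans (hdiam M p) (ENNReal.ofReal_le_ofReal (by have := hrnanti h; linarith))
      · have h0 : t M p = ∅ := by rw [ht]; exact if_neg h
        rw [h0]
        simp
    · -- covering
      filter_upwards with M
      intro x hx
      obtain ⟨n, hnM, hbd⟩ := (frequently_atTop.1 (hG x hx) M)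
      have hxS : x ∈ S n := ⟨hx, hbd⟩
      obtain ⟨y, hy, hxy⟩ := hTcov n x hxS
      refine mem_iUnion.2 ⟨⟨n, ⟨y, hy⟩⟩, ?_⟩
      rw [ht]
      dsimp only
      rw [if_pos hnM]
      exact hxy
  -- now estimate the sums
  obtain ⟨N, hN⟩ := eventually_atTop.1 hcount
  have hc0 : (0:ℝ) < c := lt_trans hs hsc
  set q : ℝ≥0∞ := ENNReal.ofReal ((2:ℝ) ^ (-(c - s))) with hq
  have hq1 : q < 1 := ENNReal.ofReal_lt_one.2
    (Real.rpow_lt_one_of_one_lt_of_neg one_lt_two (by linarith))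
  set A : ℝ≥0∞ := ENNReal.ofReal ((4:ℝ) ^ c) with hA
  set g : ℕ → ℝ≥0∞ := fun n => A * q ^ n with hg
  have hgsum : ∑' n, g n ≠ ⊤ := by
    rw [hg]
    simp only [ENNReal.tsum_mul_left, ENNReal.tsum_geometric]
    exact ENNReal.mul_ne_top ENNReal.ofReal_ne_top
      (ENNReal.inv_ne_top.2 (tsub_pos_of_lt hq1).ne')
  have hinner : ∀ M n, N ≤ n → M ≤ n →
      (∑' x : T n, EMetric.diam (t M ⟨n, x⟩) ^ c) ≤ g n := by
    intro M n hNn hMn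
    have hb : ∀ x : T n, EMetric.diam (t M ⟨n, x⟩) ^ c ≤ ENNReal.ofReal ((4 * rn n) ^ c) := by
      intro x
      calc EMetric.diam (t M ⟨n, x⟩) ^ c ≤ (ENNReal.ofReal (4 * rn n)) ^ c :=
            ENNReal.rpow_le_rpow (hdiam M ⟨n, x⟩) hc0.le
        _ = ENNReal.ofReal ((4 * rn n) ^ c) :=
            ENNReal.ofReal_rpow_of_pos (by have := hrnpos n; positivity)
    calc (∑' x : T n, EMetric.diam (t M ⟨n, x⟩) ^ c)
        ≤ ∑' _ : T n, ENNReal.ofReal ((4 * rn n) ^ c) := ENNReal.tsum_le_tsum hb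
      _ = (T n).encard * ENNReal.ofReal ((4 * rn n) ^ c) := ENNReal.tsum_set_const _ _
      _ ≤ ENNReal.ofReal (rn n ^ (-s)) * ENNReal.ofReal ((4 * rn n) ^ c) :=
            mul_le_mul_left (le_trans (hTcard n) (hN n hNn)) _
      _ = g n := by
            have hrnn := hrnpos n
            have hreal : rn n ^ (-s) * (4 * rn n) ^ c =
                (4:ℝ) ^ c * ((2:ℝ) ^ (-(c - s))) ^ (n:ℕ) := by
              rw [Real.mul_rpow (by norm_num : (0:ℝ) ≤ 4) hrnn.le]
              rw [show rn n ^ (-s) * ((4:ℝ) ^ c * rn n ^ c)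
                  = (4:ℝ) ^ c * (rn n ^ (-s) * rn n ^ c) from by ring]
              congr 1
              rw [← Real.rpow_add hrnn]
              show ((2:ℝ) ^ (-(n:ℝ))) ^ (-s + c) = ((2:ℝ) ^ (-(c - s))) ^ (n:ℕ)
              rw [← Real.rpow_natCast ((2:ℝ) ^ (-(c - s))) n,
                ← Real.rpow_mul (by norm_num : (0:ℝ) ≤ 2),
                ← Real.rpow_mul (by norm_num : (0:ℝ) ≤ 2)]
              ring_nf
            rw [← ENNReal.ofReal_mul (Real.rpow_nonneg hrnn.le _), hreal,
              ENNReal.ofReal_mul (by positivity), ENNReal.ofReal_pow (by positivity)]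
  have hsum : ∀ M, N ≤ M → (∑' p : (n : ℕ) × (T n), EMetric.diam (t M p) ^ c) ≤
      ∑' k, g (k + M) := by
    intro M hM
    rw [ENNReal.tsum_sigma']
    have hzero : ∀ i < M,
        (∑' x : T i, EMetric.diam (t M ⟨i, x⟩) ^ c) = 0 := by
      intro i hi
      have hiM : ¬ M ≤ i := by omega
      have : ∀ x : T i, EMetric.diam (t M ⟨i, x⟩) ^ c = 0 := by
        intro x
        have h0 : t M ⟨i, x⟩ = ∅ := by rw [ht]; exact if_neg hiM
        rw [h0, show EMetric.diam (∅ : Set (Euc d)) = 0 from Metric.ediam_empty]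
        exact ENNReal.zero_rpow_of_pos hc0
      simp [this]
    rw [tsum_shift_of_vanish (M := M) hzero]
    exact ENNReal.tsum_le_tsum fun k => hinner M (k + M) (le_trans hM (Nat.le_add_left M k))
      (Nat.le_add_left M k)
  have htail : Tendsto (fun M => ∑' k, g (k + M)) atTop (𝓝 0) :=
    ENNReal.tendsto_sum_nat_add g hgsum
  have hH : μH[c] G = 0 := by
    refine le_antisymm ?_ zero_le
    refine le_trans hcov ?_
    calc liminf (fun M => ∑' p : (n : ℕ) × (T n), EMetric.diam (t M p) ^ c) atTop
        ≤ liminf (fun M => ∑' k, g (k + M)) atTop := by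
          have hev : ∀ᶠ M in atTop, (∑' p : (n : ℕ) × (T n), EMetric.diam (t M p) ^ c) ≤
              ∑' k, g (k + M) := by
            filter_upwards [eventually_ge_atTop N] with M hM
            exact hsum M hM
          exact liminf_le_liminf hev
      _ = 0 := htail.liminf_eq
  have hofreal : ENNReal.ofReal c = ((c.toNNReal : ℝ≥0) : ℝ≥0∞) := rfl
  rw [hofreal]
  apply dimH_le_of_hausdorffMeasure_ne_top
  rw [Real.coe_toNNReal c hc0.le, hH]
  exact ENNReal.zero_ne_top

end AuxProofs


lemma dyadic_pos (n : ℕ) : 0 < (2:ℝ) ^ (-(n:ℝ)) := Real.rpow_pos_of_pos two_pos _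

lemma dyadic_lt_one {n : ℕ} (hn : 1 ≤ n) : (2:ℝ) ^ (-(n:ℝ)) < 1 := by
  apply Real.rpow_lt_one_of_one_lt_of_neg one_lt_two
  have : (1:ℝ) ≤ (n:ℝ) := by exact_mod_cast hn
  linarith

lemma dyadic_tendsto : Tendsto (fun n : ℕ => (2:ℝ) ^ (-(n:ℝ))) atTop (𝓝[>] (0:ℝ)) := by
  apply tendsto_nhdsWithin_of_tendsto_nhds_of_eventually_within
  · have h : ∀ n : ℕ, (2:ℝ) ^ (-(n:ℝ)) = ((2:ℝ)⁻¹) ^ n := by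
      intro n
      rw [Real.rpow_neg (by norm_num : (0:ℝ) ≤ 2), Real.rpow_natCast, inv_pow]
    simp only [h]
    exact tendsto_pow_atTop_nhds_zero_of_lt_one (by norm_num) (by norm_num)
  · filter_upwards with n
    exact dyadic_pos n

lemma elog_one_le {N : ℝ≥0∞} (h : 1 ≤ N) : 0 ≤ elog N := by
  rcases eq_or_ne N ⊤ with rfl | ht
  · rw [elog, if_neg (by simp), if_pos rfl]
    exact le_top
  have h0 : N ≠ 0 := by
    intro h0
    rw [h0] at h
    simp at h
  rw [elog, if_neg h0, if_neg ht]
  refine EReal.coe_nonneg.2 (Real.log_nonneg ?_)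
  have := (ENNReal.toReal_le_toReal (by simp) ht).2 h
  simpa using this

lemma ldCount_singleton_le {d : ℕ} (μ : Measure (Euc d)) {x : Euc d} (hx : x ∈ msupp μ)
    {lo hi : ℝ≥0∞} {r : ℝ} (h1 : lo ≤ μ (closedBall x r)) (h2 : μ (closedBall x r) ≤ hi) :
    1 ≤ ldCount μ lo hi r := by
  have hpack : IsPacking μ r {x} :=
    ⟨singleton_subset_iff.2 hx, pairwiseDisjoint_singleton _ _⟩
  have hset : {y ∈ ({x} : Set (Euc d)) | lo ≤ μ (closedBall y r) ∧ μ (closedBall y r) ≤ hi}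
      = {x} := by
    ext y
    simp only [mem_setOf_eq, mem_singleton_iff, and_iff_left_iff_imp]
    rintro rfl
    exact ⟨h1, h2⟩
  have hle : ((({y ∈ ({x} : Set (Euc d)) | lo ≤ μ (closedBall y r) ∧ μ (closedBall y r) ≤ hi}).encard : ℕ∞) : ℝ≥0∞) ≤ ldCount μ lo hi r :=
    le_iSup₂ (f := fun (P : Set (Euc d)) (_ : IsPacking μ r P) =>
      ((({y ∈ P | lo ≤ μ (closedBall y r) ∧ μ (closedBall y r) ≤ hi}).encard : ℕ∞) : ℝ≥0∞))
      ({x}) hpack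
  rw [hset] at hle
  simpa using hle

lemma rpowE_coe (r : ℝ) (a : ℝ) : rpowE r ((a : ℝ) : EReal) = ENNReal.ofReal (r ^ a) := by
  rw [rpowE, if_neg (by simp), if_neg (by simp), EReal.toReal_coe]


/-- from Section 5.2: the set of points admitting `α` as a limit of
dyadic-scale local exponents has Hausdorff dimension at most `f̄^LD_μ(α)`. -/
theorem statement15 (d : ℕ) (hd : 1 ≤ d) (μ : Measure (Euc d)) (hμ : McPlus μ)
    (α : EReal) (h0 : 0 ≤ α) :
    dimHE {x ∈ msupp μ | ∃ nseq : ℕ → ℕ, StrictMono nseq ∧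
      Filter.Tendsto
        (fun j : ℕ =>
          elog (μ (closedBall x ((2:ℝ) ^ (-(nseq j : ℝ))))) *
            (((Real.log ((2:ℝ) ^ (-(nseq j : ℝ))))⁻¹ : ℝ) : EReal))
        atTop (𝓝 α)} ≤ fLDup μ α := by
  classical
  haveI : IsFiniteMeasure μ := hμ.1
  set G := {x ∈ msupp μ | ∃ nseq : ℕ → ℕ, StrictMono nseq ∧
      Filter.Tendsto
        (fun j : ℕ =>
          elog (μ (closedBall x ((2:ℝ) ^ (-(nseq j : ℝ))))) *
            (((Real.log ((2:ℝ) ^ (-(nseq j : ℝ))))⁻¹ : ℝ) : EReal))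
        atTop (𝓝 α)} with hGdef
  by_cases hGe : G = ∅
  · rw [dimHE, if_pos hGe]
    exact bot_le
  have hne : G.Nonempty := nonempty_iff_ne_empty.2 hGe
  have hGsupp : G ⊆ msupp μ := fun x hx => hx.1
  obtain ⟨x₀, hx₀supp, nseq₀, hmono₀, htend₀⟩ := hne
  have hnt₀ : Tendsto nseq₀ atTop atTop := hmono₀.tendsto_atTop
  have hrj₀ : Tendsto (fun j => (2:ℝ) ^ (-(nseq₀ j : ℝ))) atTop (𝓝[>] (0:ℝ)) :=
    dyadic_tendsto.comp hnt₀
  -- Step 1: fLDup is nonnegative since G is nonempty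
  have hnonneg : (0 : EReal) ≤ fLDup μ α := by
    rw [fLDup]
    split_ifs with hα
    · refine le_iInf fun A => ?_
      apply le_limsup_of_frequently_le'
      apply hrj₀.frequently
      apply Eventually.frequently
      have hev : ∀ᶠ j in atTop, (A : EReal) <
          elog (μ (closedBall x₀ ((2:ℝ) ^ (-(nseq₀ j : ℝ))))) *
            (((Real.log ((2:ℝ) ^ (-(nseq₀ j : ℝ))))⁻¹ : ℝ) : EReal) := by
        rw [hα] at htend₀
        have := htend₀.eventually (Ioi_mem_nhds (EReal.coe_lt_top A))
        filter_upwards [this] with j hj using hj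
      filter_upwards [hev, hnt₀.eventually (eventually_ge_atTop 1)] with j hj hj1
      have hr0 := dyadic_pos (nseq₀ j)
      have hr1 := dyadic_lt_one hj1
      have hmB := helper2 hr0 hr1 (measure_ne_top μ _) hj
      have hld := ldCount_singleton_le μ hx₀supp zero_le hmB
      refine mul_nonneg (elog_one_le hld) (EReal.coe_nonneg.2 ?_)
      have : Real.log ((2:ℝ) ^ (-(nseq₀ j : ℝ))) < 0 := Real.log_neg hr0 hr1
      exact inv_nonneg.2 (by linarith)
    · obtain ⟨a, ha⟩ : ∃ a : ℝ, α = (a : EReal) := by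
        induction α with
        | bot => exact absurd h0 (by simp)
        | coe a => exact ⟨a, rfl⟩
        | top => exact absurd rfl hα
      refine le_iInf fun ε => le_iInf fun hε => ?_
      apply le_limsup_of_frequently_le'
      apply hrj₀.frequently
      apply Eventually.frequently
      have hev : ∀ᶠ j in atTop,
          elog (μ (closedBall x₀ ((2:ℝ) ^ (-(nseq₀ j : ℝ))))) *
            (((Real.log ((2:ℝ) ^ (-(nseq₀ j : ℝ))))⁻¹ : ℝ) : EReal) ∈
            Ioo (((a - ε : ℝ) : EReal)) (((a + ε : ℝ) : EReal)) := by
        rw [ha] at htend₀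
        exact htend₀.eventually (Ioo_mem_nhds (EReal.coe_lt_coe_iff.2 (by linarith))
          (EReal.coe_lt_coe_iff.2 (by linarith)))
      filter_upwards [hev, hnt₀.eventually (eventually_ge_atTop 1)] with j hj hj1
      have hr0 := dyadic_pos (nseq₀ j)
      have hr1 := dyadic_lt_one hj1
      have hb := helper1 hr0 hr1 hj.1 hj.2
      have heq1 : α + (ε : EReal) = (((a + ε : ℝ)) : EReal) := by rw [ha]; exact (EReal.coe_add a ε).symm
      have heq2 : α - (ε : EReal) = (((a - ε : ℝ)) : EReal) := by rw [ha]; exact (EReal.coe_sub a ε).symm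
      have hld : 1 ≤ ldCount μ (rpowE ((2:ℝ) ^ (-(nseq₀ j : ℝ))) (α + (ε : EReal)))
          (rpowE ((2:ℝ) ^ (-(nseq₀ j : ℝ))) (α - (ε : EReal))) ((2:ℝ) ^ (-(nseq₀ j : ℝ))) := by
        rw [heq1, heq2, rpowE_coe, rpowE_coe]
        exact ldCount_singleton_le μ hx₀supp hb.1 hb.2
      refine mul_nonneg (elog_one_le hld) (EReal.coe_nonneg.2 ?_)
      have : Real.log ((2:ℝ) ^ (-(nseq₀ j : ℝ))) < 0 := Real.log_neg hr0 hr1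
      exact inv_nonneg.2 (by linarith)
  -- Step 2: main bound
  by_contra hcon
  push_neg at hcon
  obtain ⟨c, hc1, hc2⟩ := EReal.exists_between_coe_real hcon
  obtain ⟨s', hs1, hs2⟩ := EReal.exists_between_coe_real hc1
  have hs'0 : (0:ℝ) < s' := EReal.coe_pos.1 (lt_of_le_of_lt hnonneg hs1)
  have hs'c : s' < c := EReal.coe_lt_coe_iff.1 hs2
  have hdim : dimH G ≤ ENNReal.ofReal c := by
    rcases eq_or_ne α ⊤ with hα | hα
    · rw [fLDup, if_pos hα] at hs1
      obtain ⟨A, hA⟩ := iInf_lt_iff.1 hs1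
      have hev := eventually_lt_of_limsup_lt hA
      have hevn := dyadic_tendsto.eventually hev
      have hcount : ∀ᶠ n : ℕ in atTop,
          ldCount μ 0 (ENNReal.ofReal (((2:ℝ) ^ (-(n:ℝ))) ^ A)) ((2:ℝ) ^ (-(n:ℝ))) ≤
            ENNReal.ofReal (((2:ℝ) ^ (-(n:ℝ))) ^ (-s')) := by
        filter_upwards [hevn, eventually_ge_atTop 1] with n hn hn1
        exact helper3 (dyadic_pos n) (dyadic_lt_one hn1) hn
      refine key μ G hGsupp (fun _ => 0) (fun n => ENNReal.ofReal (((2:ℝ) ^ (-(n:ℝ))) ^ A))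
        hs'0 hs'c ?_ hcount
      intro x hx
      obtain ⟨hxsupp, nseq, hmono, htend⟩ := hx
      rw [hα] at htend
      apply (hmono.tendsto_atTop).frequently
      apply Eventually.frequently
      have hev2 := htend.eventually (Ioi_mem_nhds (EReal.coe_lt_top A))
      filter_upwards [hev2, hmono.tendsto_atTop.eventually (eventually_ge_atTop 1)] with j hj hj1
      exact ⟨zero_le, helper2 (dyadic_pos _) (dyadic_lt_one hj1) (measure_ne_top μ _) hj⟩
    · obtain ⟨a, ha⟩ : ∃ a : ℝ, α = (a : EReal) := by
        induction α with
        | bot => exact absurd h0 (by simp)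
        | coe a => exact ⟨a, rfl⟩
        | top => exact absurd rfl hα
      rw [fLDup, if_neg hα] at hs1
      obtain ⟨ε, hεr⟩ := iInf_lt_iff.1 hs1
      obtain ⟨hε, hεlim⟩ := iInf_lt_iff.1 hεr
      have hev := eventually_lt_of_limsup_lt hεlim
      have hevn := dyadic_tendsto.eventually hev
      have hcount : ∀ᶠ n : ℕ in atTop,
          ldCount μ (rpowE ((2:ℝ) ^ (-(n:ℝ))) (α + (ε : EReal)))
            (rpowE ((2:ℝ) ^ (-(n:ℝ))) (α - (ε : EReal))) ((2:ℝ) ^ (-(n:ℝ))) ≤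
            ENNReal.ofReal (((2:ℝ) ^ (-(n:ℝ))) ^ (-s')) := by
        filter_upwards [hevn, eventually_ge_atTop 1] with n hn hn1
        exact helper3 (dyadic_pos n) (dyadic_lt_one hn1) hn
      refine key μ G hGsupp (fun n => rpowE ((2:ℝ) ^ (-(n:ℝ))) (α + (ε : EReal)))
        (fun n => rpowE ((2:ℝ) ^ (-(n:ℝ))) (α - (ε : EReal))) hs'0 hs'c ?_ hcount
      intro x hx
      obtain ⟨hxsupp, nseq, hmono, htend⟩ := hx
      rw [ha] at htend
      apply (hmono.tendsto_atTop).frequently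
      apply Eventually.frequently
      have hev2 := htend.eventually (Ioo_mem_nhds
        (EReal.coe_lt_coe_iff.2 (by linarith : a - ε < a))
        (EReal.coe_lt_coe_iff.2 (by linarith : a < a + ε)))
      filter_upwards [hev2, hmono.tendsto_atTop.eventually (eventually_ge_atTop 1)] with j hj hj1
      have hb := helper1 (dyadic_pos (nseq j)) (dyadic_lt_one hj1) hj.1 hj.2
      have heq1 : α + (ε : EReal) = (((a + ε : ℝ)) : EReal) := by rw [ha]; exact (EReal.coe_add a ε).symm
      have heq2 : α - (ε : EReal) = (((a - ε : ℝ)) : EReal) := by rw [ha]; exact (EReal.coe_sub a ε).symm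
      rw [heq1, heq2, rpowE_coe, rpowE_coe]
      exact ⟨hb.1, hb.2⟩
  have hfin : dimHE G ≤ (c : EReal) := by
    rw [dimHE, if_neg hGe]
    calc ((dimH G : ℝ≥0∞) : EReal) ≤ ((ENNReal.ofReal c : ℝ≥0∞) : EReal) :=
          EReal.coe_ennreal_le_coe_ennreal_iff.2 hdim
      _ = ((max c 0 : ℝ) : EReal) := by rw [EReal.coe_ennreal_ofReal]
      _ = (c : EReal) := by rw [max_eq_left (le_of_lt (lt_trans hs'0 hs'c))]
  exact absurd hfin (not_le.2 hc2)

end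
end

section
/- Let d ≥ 1 and let μ ∈ M_c^+(ℝ^d) be exact dimensional with dimension D ∈ [0,d]. Then dim_H E(μ,D) ≥ D, and D is a fixed point of τ_μ*: inf{Dq − τ_μ(q) : q ∈ dom(τ_μ)} = D. Consequently μ strongly obeys the multifractal formalism at D: dim_H E(μ,D) = τ_μ*(D) = D. -/
open MeasureTheory Metric Set Filter Topology
open scoped ENNReal NNReal

noncomputable section

/-! ### Auxiliary lemmas -/

section Aux

variable {d : ℕ}

lemma elog_pos_finite {a : ℝ≥0∞} (h0 : a ≠ 0) (ht : a ≠ ⊤) :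
    elog a = ((Real.log a.toReal : ℝ) : EReal) := by
  simp [elog, h0, ht]

lemma elog_ofReal {t : ℝ} (ht : 0 < t) :
    elog (ENNReal.ofReal t) = ((Real.log t : ℝ) : EReal) := by
  rw [elog_pos_finite (by simp [ht]) ENNReal.ofReal_ne_top, ENNReal.toReal_ofReal ht.le]

lemma mem_msupp {μ : Measure (Euc d)} {x : Euc d} (hx : x ∈ msupp μ) {r : ℝ} (hr : 0 < r) :
    0 < μ (closedBall x r) := hx r hr

lemma msupp_compl_null (μ : Measure (Euc d)) : μ (msupp μ)ᶜ = 0 := by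
  have h : ∀ x ∈ (msupp μ)ᶜ, ∃ r : ℝ, 0 < r ∧ μ (closedBall x r) = 0 := by
    intro x hx
    simp only [msupp, mem_compl_iff, mem_setOf_eq, not_forall] at hx
    obtain ⟨r, hr, hr0⟩ := hx
    exact ⟨r, hr, le_antisymm (not_lt.1 hr0) zero_le⟩
  choose! r hr hr0 using h
  obtain ⟨t, hts, htc, hcov⟩ :=
    TopologicalSpace.countable_cover_nhdsWithin
      (f := fun x => closedBall x (r x)) (s := (msupp μ)ᶜ)
      (fun x hx => nhdsWithin_le_nhds (closedBall_mem_nhds x (hr x hx)))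
  refine le_antisymm ?_ zero_le
  calc μ (msupp μ)ᶜ ≤ μ (⋃ x ∈ t, closedBall x (r x)) := measure_mono hcov
    _ ≤ ∑' x : t, μ (closedBall (x : Euc d) (r x)) := measure_biUnion_le μ htc _
    _ = 0 := by
        convert tsum_zero with x
        exact hr0 x (hts x.2)

lemma le_measure_of_compl_null {μ : Measure (Euc d)} {s : Set (Euc d)} (h : μ sᶜ = 0) :
    μ univ ≤ μ s := by
  calc μ univ = μ (s ∪ sᶜ) := by rw [union_compl_self]
    _ ≤ μ s + μ sᶜ := measure_union_le _ _
    _ = μ s := by rw [h, add_zero]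

lemma msupp_nonempty {μ : Measure (Euc d)} (hμ : μ ≠ 0) : (msupp μ).Nonempty := by
  rw [nonempty_iff_ne_empty]
  intro h
  have h1 : μ univ ≤ μ (msupp μ) := le_measure_of_compl_null (msupp_compl_null μ)
  rw [h] at h1
  simp only [measure_empty, nonpos_iff_eq_zero] at h1
  exact (Measure.measure_univ_pos.2 hμ).ne' h1

lemma tendsto_invlog : Tendsto (fun r : ℝ => (Real.log r)⁻¹) (𝓝[>] (0:ℝ)) (𝓝 0) := by
  have h1 : Tendsto (fun r : ℝ => -Real.log r) (𝓝[>] (0:ℝ)) atTop :=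
    tendsto_neg_atBot_atTop.comp Real.tendsto_log_nhdsGT_zero
  have h2 : Tendsto (fun r : ℝ => (-Real.log r)⁻¹) (𝓝[>] (0:ℝ)) (𝓝 0) := h1.inv_tendsto_atTop
  have h3 : (fun r : ℝ => (Real.log r)⁻¹) = fun r : ℝ => -(-Real.log r)⁻¹ := by
    ext r; rw [inv_neg, neg_neg]
  rw [h3]
  simpa using h2.neg

lemma liminf_le_of_le_coe {f : ℝ → EReal} {g : ℝ → ℝ} {L : ℝ}
    (h : ∀ᶠ r in 𝓝[>] (0:ℝ), f r ≤ ((g r : ℝ) : EReal))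
    (hg : Tendsto g (𝓝[>] (0:ℝ)) (𝓝 L)) :
    Filter.liminf f (𝓝[>] (0:ℝ)) ≤ ((L : ℝ) : EReal) := by
  have h2 : Tendsto (fun r => ((g r : ℝ) : EReal)) (𝓝[>] (0:ℝ)) (𝓝 ((L : ℝ) : EReal)) :=
    EReal.tendsto_coe.mpr hg
  calc Filter.liminf f (𝓝[>] (0:ℝ)) ≤ Filter.liminf (fun r => ((g r : ℝ) : EReal)) (𝓝[>] (0:ℝ)) :=
        liminf_le_liminf h
    _ = ((L : ℝ) : EReal) := h2.liminf_eq

lemma coe_le_liminf {f : ℝ → EReal} {g : ℝ → ℝ} {L : ℝ}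
    (h : ∀ᶠ r in 𝓝[>] (0:ℝ), ((g r : ℝ) : EReal) ≤ f r)
    (hg : Tendsto g (𝓝[>] (0:ℝ)) (𝓝 L)) :
    ((L : ℝ) : EReal) ≤ Filter.liminf f (𝓝[>] (0:ℝ)) := by
  have h2 : Tendsto (fun r => ((g r : ℝ) : EReal)) (𝓝[>] (0:ℝ)) (𝓝 ((L : ℝ) : EReal)) :=
    EReal.tendsto_coe.mpr hg
  calc ((L : ℝ) : EReal) = Filter.liminf (fun r => ((g r : ℝ) : EReal)) (𝓝[>] (0:ℝ)) :=
        h2.liminf_eq.symm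
    _ ≤ Filter.liminf f (𝓝[>] (0:ℝ)) := liminf_le_liminf h

lemma localdim_fun_eq {μ : Measure (Euc d)} [IsFiniteMeasure μ] {x : Euc d} (hx : x ∈ msupp μ)
    {r : ℝ} (hr : 0 < r) :
    elog (μ (closedBall x r)) * (((Real.log r)⁻¹ : ℝ) : EReal)
      = ((Real.log (μ (closedBall x r)).toReal / Real.log r : ℝ) : EReal) := by
  rw [elog_pos_finite (hx r hr).ne' (measure_ne_top μ _), ← EReal.coe_mul, div_eq_mul_inv]

lemma mem_Epoint_of_tendsto {μ : Measure (Euc d)} [IsFiniteMeasure μ] {x : Euc d} {D : ℝ}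
    (hx : x ∈ msupp μ)
    (hten : Tendsto (fun r : ℝ => Real.log (μ (closedBall x r)).toReal / Real.log r)
      (𝓝[>] (0:ℝ)) (𝓝 D)) :
    x ∈ Epoint μ ((D : ℝ) : EReal) := by
  have hEq : ∀ᶠ r in 𝓝[>] (0:ℝ),
      ((Real.log (μ (closedBall x r)).toReal / Real.log r : ℝ) : EReal)
        = elog (μ (closedBall x r)) * (((Real.log r)⁻¹ : ℝ) : EReal) := by
    filter_upwards [self_mem_nhdsWithin] with r hr
    exact (localdim_fun_eq hx hr).symm
  have hten2 : Tendsto (fun r : ℝ => elog (μ (closedBall x r)) * (((Real.log r)⁻¹ : ℝ) : EReal))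
      (𝓝[>] (0:ℝ)) (𝓝 ((D : ℝ) : EReal)) :=
    (EReal.tendsto_coe.mpr hten).congr' hEq
  exact ⟨hx, hten2.liminf_eq, hten2.limsup_eq⟩

end Aux
section Aux2

variable {d : ℕ}

lemma exists_good_set {μ : Measure (Euc d)} [IsFiniteMeasure μ] (hμ0 : μ ≠ 0) {D : ℝ}
    (hex : ExactDim μ D) {ε : ℝ} (hε : 0 < ε) :
    ∃ (A : Set (Euc d)) (δ : ℝ), 0 < δ ∧ δ ≤ 1 ∧ 0 < μ A ∧ A ⊆ msupp μ ∧
      ∀ x ∈ A, ∀ r : ℝ, 0 < r → r < δ →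
        ENNReal.ofReal (r ^ (D + ε)) ≤ μ (closedBall x r) ∧
        μ (closedBall x r) ≤ ENNReal.ofReal (r ^ (D - ε)) := by
  classical
  set F : Set (Euc d) := msupp μ ∩
    {x | Tendsto (fun r : ℝ => Real.log (μ (closedBall x r)).toReal / Real.log r)
      (𝓝[>] (0:ℝ)) (𝓝 D)} with hFdef
  have hFc : μ Fᶜ = 0 := by
    rw [hFdef, compl_inter]
    refine le_antisymm ?_ zero_le
    calc μ ((msupp μ)ᶜ ∪ _) ≤ μ (msupp μ)ᶜ + μ {x | Tendsto (fun r : ℝ =>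
          Real.log (μ (closedBall x r)).toReal / Real.log r) (𝓝[>] (0:ℝ)) (𝓝 D)}ᶜ :=
        measure_union_le _ _
      _ = 0 := by
        rw [msupp_compl_null μ, zero_add]
        exact hex
  set A : ℕ → Set (Euc d) := fun n => F ∩
    {x | ∀ r : ℝ, 0 < r → r < 1/(n+1) →
      ENNReal.ofReal (r ^ (D + ε)) ≤ μ (closedBall x r) ∧
      μ (closedBall x r) ≤ ENNReal.ofReal (r ^ (D - ε))} with hAdef
  have hmono : Monotone A := by
    intro n m hnm
    refine inter_subset_inter_right _ fun x hx r hr hrm => hx r hr (hrm.trans_le ?_)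
    have h1 : (0:ℝ) < n + 1 := by positivity
    have h2 : (n:ℝ) + 1 ≤ m + 1 := by exact_mod_cast by omega
    exact one_div_le_one_div_of_le h1 h2
  have hsub : F ⊆ ⋃ n, A n := by
    intro x hx
    have hev : ∀ᶠ r in 𝓝[>] (0:ℝ),
        Real.log (μ (closedBall x r)).toReal / Real.log r ∈ Ioo (D - ε) (D + ε) :=
      hx.2 (Ioo_mem_nhds (by linarith) (by linarith))
    have hev2 : ∀ᶠ r in 𝓝[>] (0:ℝ), (Real.log (μ (closedBall x r)).toReal / Real.log r
        ∈ Ioo (D - ε) (D + ε)) ∧ r ∈ Ioo (0:ℝ) 1 := by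
      filter_upwards [hev, Ioo_mem_nhdsGT_of_mem (by constructor <;> norm_num : (0:ℝ) ∈ Ico (0:ℝ) 1)]
        with r h1 h2 using ⟨h1, h2⟩
    obtain ⟨u, hu, huP⟩ := mem_nhdsGT_iff_exists_Ioo_subset.1 hev2
    obtain ⟨n, hn⟩ := exists_nat_one_div_lt (show (0:ℝ) < min u 1 by
      simp only [lt_min_iff]; exact ⟨hu, one_pos⟩)
    refine mem_iUnion.2 ⟨n, hx, fun r hr hrn => ?_⟩
    have hrP : r ∈ Ioo (0:ℝ) u := ⟨hr, hrn.trans (hn.trans_le (min_le_left _ _))⟩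
    obtain ⟨hfr, hr1⟩ := huP hrP
    have hm0 : μ (closedBall x r) ≠ 0 := (hx.1 r hr).ne'
    have hmt : μ (closedBall x r) ≠ ⊤ := measure_ne_top μ _
    have hmR : 0 < (μ (closedBall x r)).toReal := ENNReal.toReal_pos hm0 hmt
    have hlogr : Real.log r < 0 := Real.log_neg hr hr1.2
    constructor
    · have h1 : (D + ε) * Real.log r < Real.log (μ (closedBall x r)).toReal := by
        have := hfr.2
        calc (D + ε) * Real.log r
            < (Real.log (μ (closedBall x r)).toReal / Real.log r) * Real.log r := by
              exact mul_lt_mul_of_neg_right this hlogr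
          _ = Real.log (μ (closedBall x r)).toReal := by
              rw [div_mul_eq_mul_div, mul_div_cancel_right₀ _ hlogr.ne]
      rw [← Real.log_rpow hr] at h1
      have := (Real.log_lt_log_iff (Real.rpow_pos_of_pos hr _) hmR).1 h1
      calc ENNReal.ofReal (r ^ (D + ε)) ≤ ENNReal.ofReal (μ (closedBall x r)).toReal :=
            ENNReal.ofReal_le_ofReal this.le
        _ = μ (closedBall x r) := ENNReal.ofReal_toReal hmt
    · have h1 : Real.log (μ (closedBall x r)).toReal < (D - ε) * Real.log r := by
        have := hfr.1
        calc Real.log (μ (closedBall x r)).toReal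
            = (Real.log (μ (closedBall x r)).toReal / Real.log r) * Real.log r := by
              rw [div_mul_eq_mul_div, mul_div_cancel_right₀ _ hlogr.ne]
          _ < (D - ε) * Real.log r := mul_lt_mul_of_neg_right this hlogr
      rw [← Real.log_rpow hr] at h1
      have := (Real.log_lt_log_iff hmR (Real.rpow_pos_of_pos hr _)).1 h1
      calc μ (closedBall x r) = ENNReal.ofReal (μ (closedBall x r)).toReal :=
            (ENNReal.ofReal_toReal hmt).symm
        _ ≤ ENNReal.ofReal (r ^ (D - ε)) := ENNReal.ofReal_le_ofReal this.le
  have hpos : 0 < μ (⋃ n, A n) :=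
    lt_of_lt_of_le (Measure.measure_univ_pos.2 hμ0)
      ((le_measure_of_compl_null hFc).trans (measure_mono hsub))
  rw [hmono.measure_iUnion] at hpos
  have : ∃ n, 0 < μ (A n) := by
    by_contra h
    push_neg at h
    simp only [nonpos_iff_eq_zero] at h
    simp [h] at hpos
  obtain ⟨n, hn⟩ := this
  refine ⟨A n, 1/(n+1), by positivity, ?_, hn, fun x hx => hx.1.1, fun x hx => hx.2⟩
  rw [div_le_one (by positivity)]
  have : (0:ℝ) ≤ n := Nat.cast_nonneg n
  linarith

lemma exists_separated_cover {A : Set (Euc d)} {r : ℝ} (hr : 0 < r) :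
    ∃ S ⊆ A, (S.Pairwise fun x y => 2*r < dist x y) ∧ A ⊆ ⋃ x ∈ S, closedBall x (2*r) := by
  classical
  set 𝒮 : Set (Set (Euc d)) := {s | s ⊆ A ∧ s.Pairwise fun x y => 2*r < dist x y} with h𝒮
  have hchainub : ∀ c ⊆ 𝒮, IsChain (· ⊆ ·) c → ∃ ub ∈ 𝒮, ∀ s ∈ c, s ⊆ ub := by
    intro c hc hchain
    refine ⟨⋃₀ c, ⟨sUnion_subset fun s hs => (hc hs).1, ?_⟩, fun s hs => subset_sUnion_of_mem hs⟩
    rintro x ⟨s, hs, hxs⟩ y ⟨t, ht, hyt⟩ hxy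
    rcases hchain.total hs ht with h | h
    · exact (hc ht).2 (h hxs) hyt hxy
    · exact (hc hs).2 hxs (h hyt) hxy
  obtain ⟨S, hS⟩ := zorn_subset 𝒮 hchainub
  · refine ⟨S, hS.prop.1, hS.prop.2, fun y hy => ?_⟩
    by_cases hyS : ∃ x ∈ S, dist y x ≤ 2*r
    · obtain ⟨x, hxS, hxy⟩ := hyS
      exact mem_biUnion hxS (by simpa [mem_closedBall] using hxy)
    · push_neg at hyS
      have hins : insert y S ∈ 𝒮 := by
        refine ⟨insert_subset hy hS.prop.1, hS.prop.2.insert fun x hxS hxy => ?_⟩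
        exact ⟨hyS x hxS, by rw [dist_comm]; exact hyS x hxS⟩
      have : insert y S ⊆ S := hS.2 hins (subset_insert y S)
      have hyS' : y ∈ S := this (mem_insert y S)
      have := hyS y hyS'
      rw [dist_self] at this
      linarith

lemma le_packSum {μ : Measure (Euc d)} {q r : ℝ} {P : Set (Euc d)} (hP : IsPacking μ r P) :
    ∑' x : P, μ (closedBall (x : Euc d) r) ^ q ≤ packSum μ q r :=
  le_iSup₂ (f := fun (P : Set (Euc d)) (_ : IsPacking μ r P) =>
    ∑' x : P, μ (closedBall (x : Euc d) r) ^ q) P hP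

lemma packSum_one_le {μ : Measure (Euc d)} (r : ℝ) : packSum μ 1 r ≤ μ univ := by
  refine iSup₂_le fun P hP => ?_
  have key : ∀ F : Finset P, ∑ x ∈ F, μ (closedBall (x : Euc d) r) ≤ μ univ := by
    intro F
    have hdisj : (F : Set P).PairwiseDisjoint fun x : P => closedBall (x : Euc d) r :=
      fun i _ j _ hij => hP.2 i.2 j.2 (Subtype.coe_injective.ne hij)
    calc ∑ x ∈ F, μ (closedBall (x : Euc d) r)
        = μ (⋃ x ∈ F, closedBall (x : Euc d) r) :=
          (measure_biUnion_finset hdisj fun _ _ => measurableSet_closedBall).symm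
      _ ≤ μ univ := measure_mono (subset_univ _)
  have : ∑' x : P, μ (closedBall (x : Euc d) r) ^ (1:ℝ)
      = ∑' x : P, μ (closedBall (x : Euc d) r) := by
    simp [ENNReal.rpow_one]
  rw [this, ENNReal.tsum_eq_iSup_sum]
  exact iSup_le key

lemma tauLow_one_nonneg {μ : Measure (Euc d)} [IsFiniteMeasure μ] (hμ0 : μ ≠ 0) :
    (0 : EReal) ≤ tauLow μ 1 := by
  obtain ⟨x₀, hx₀⟩ := msupp_nonempty hμ0
  have h0 : ((0:ℝ) : EReal) ≤ tauLow μ 1 := by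
    refine coe_le_liminf (g := fun r => Real.log (μ univ).toReal * (Real.log r)⁻¹) ?_ ?_
    · filter_upwards [Ioo_mem_nhdsGT_of_mem
        (by constructor <;> norm_num : (0:ℝ) ∈ Ico (0:ℝ) 1)] with r hr
      have hpack : IsPacking μ r {x₀} :=
        ⟨singleton_subset_iff.2 hx₀, pairwiseDisjoint_singleton _ _⟩
      have hle : μ (closedBall x₀ r) ^ (1:ℝ) ≤ packSum μ 1 r := by
        have := le_packSum (q := 1) hpack
        rwa [tsum_singleton x₀ (fun x => μ (closedBall x r) ^ (1:ℝ))] at this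
      have hpos : 0 < packSum μ 1 r := by
        refine lt_of_lt_of_le ?_ hle
        rw [ENNReal.rpow_one]
        exact hx₀ r hr.1
      have hfin : packSum μ 1 r ≤ μ univ := packSum_one_le r
      have hnt : packSum μ 1 r ≠ ⊤ := (hfin.trans_lt (measure_lt_top μ _)).ne
      have huniv0 : 0 < (μ univ).toReal :=
        ENNReal.toReal_pos (Measure.measure_univ_pos.2 hμ0).ne' (measure_ne_top μ _)
      have hlogr : (Real.log r)⁻¹ ≤ 0 :=
        inv_nonpos.2 (Real.log_nonpos hr.1.le hr.2.le)
      have hRle : Real.log (packSum μ 1 r).toReal ≤ Real.log (μ univ).toReal :=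
        Real.log_le_log (ENNReal.toReal_pos hpos.ne' hnt)
          (ENNReal.toReal_mono (measure_ne_top μ _) hfin)
      have := mul_le_mul_of_nonpos_right hRle hlogr
      rw [elog_pos_finite hpos.ne' hnt, ← EReal.coe_mul]
      exact_mod_cast EReal.coe_le_coe_iff.2 this
    · have := tendsto_invlog.const_mul (Real.log (μ univ).toReal)
      simpa using this
  exact_mod_cast h0

end Aux2
section Aux3

variable {d : ℕ}

lemma ennreal_rpow_le_rpow_of_nonpos {x y : ℝ≥0∞} (hxy : x ≤ y) {q : ℝ} (hq : q ≤ 0) :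
    y ^ q ≤ x ^ q := by
  have h1 : x ^ (-q) ≤ y ^ (-q) := ENNReal.rpow_le_rpow hxy (by linarith)
  have h2 : (y ^ (-q))⁻¹ ≤ (x ^ (-q))⁻¹ := ENNReal.inv_le_inv.2 h1
  rwa [← ENNReal.rpow_neg, ← ENNReal.rpow_neg, neg_neg] at h2

lemma tauLow_le_bound {μ : Measure (Euc d)} [IsFiniteMeasure μ] (hμ0 : μ ≠ 0) {D : ℝ}
    (hex : ExactDim μ D) (q : ℝ) {ε : ℝ} (hε : 0 < ε) :
    tauLow μ q ≤ ((max ((D+ε)*q) ((D-ε)*q) - (D-ε) : ℝ) : EReal) := by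
  classical
  obtain ⟨A, δ, hδ0, hδ1, hA0, hAsupp, hAb⟩ := exists_good_set hμ0 hex hε
  set e1 := max ((D+ε)*q) ((D-ε)*q) with he1
  set a := (μ A).toReal with hadef
  have ha : 0 < a := ENNReal.toReal_pos hA0.ne' (measure_ne_top μ _)
  set g : ℝ → ℝ := fun r => Real.log (a * (r ^ e1 / (2*r) ^ (D-ε))) * (Real.log r)⁻¹ with hgdef
  have hpt : ∀ᶠ r in 𝓝[>] (0:ℝ),
      elog (packSum μ q r) * (((Real.log r)⁻¹ : ℝ) : EReal) ≤ ((g r : ℝ) : EReal) := by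
    filter_upwards [Ioo_mem_nhdsGT_of_mem
      (show (0:ℝ) ∈ Ico (0:ℝ) (δ/2) from ⟨le_rfl, by linarith⟩)] with r hr
    have hr0 : 0 < r := hr.1
    have hrδ : r < δ := by linarith [hr.2]
    have h2r : 0 < 2*r := by linarith
    have h2rδ : 2*r < δ := by linarith [hr.2]
    have hr1 : r < 1 := lt_of_lt_of_le hrδ hδ1
    have hlogr : Real.log r < 0 := Real.log_neg hr0 hr1
    obtain ⟨S, hSA, hSsep, hScov⟩ := exists_separated_cover (A := A) hr0
    set t := a * (r ^ e1 / (2*r) ^ (D-ε)) with ht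
    have htpos : 0 < t :=
      mul_pos ha (div_pos (Real.rpow_pos_of_pos hr0 _) (Real.rpow_pos_of_pos h2r _))
    have hpack : IsPacking μ r S := by
      refine ⟨hSA.trans hAsupp, fun x hx y hy hxy => ?_⟩
      exact closedBall_disjoint_closedBall (by have := hSsep hx hy hxy; linarith)
    have hcnt : S.Countable := by
      have hdisj : Pairwise (Function.onFun Disjoint fun i : ↥S => closedBall (i : Euc d) r) :=
        fun i j hij => hpack.2 i.2 j.2 (Subtype.coe_injective.ne hij)
      have hc := Measure.countable_meas_pos_of_disjoint_iUnion (μ := μ)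
        (As := fun i : ↥S => closedBall (i : Euc d) r) (fun _ => measurableSet_closedBall) hdisj
      have hall : {i : ↥S | 0 < μ (closedBall (i : Euc d) r)} = univ :=
        eq_univ_of_forall fun i => hAsupp (hSA i.2) r hr0
      rw [hall] at hc
      exact countable_coe_iff.1 (countable_univ_iff.1 hc)
    have hlow : ∀ x ∈ S, ENNReal.ofReal (r ^ e1) ≤ μ (closedBall x r) ^ q := by
      intro x hx
      obtain ⟨hlo, hhi⟩ := hAb x (hSA hx) r hr0 hrδ
      rcases le_or_gt 0 q with hq | hq
      · have h1 : ENNReal.ofReal (r ^ (D+ε)) ^ q ≤ μ (closedBall x r) ^ q :=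
          ENNReal.rpow_le_rpow hlo hq
        have h2 : ENNReal.ofReal (r ^ (D+ε)) ^ q = ENNReal.ofReal (r ^ e1) := by
          rw [ENNReal.ofReal_rpow_of_pos (Real.rpow_pos_of_pos hr0 _), ← Real.rpow_mul hr0.le,
            he1, max_eq_left (by nlinarith : (D-ε)*q ≤ (D+ε)*q)]
        rw [← h2]; exact h1
      · have h1 : ENNReal.ofReal (r ^ (D-ε)) ^ q ≤ μ (closedBall x r) ^ q :=
          ennreal_rpow_le_rpow_of_nonpos hhi hq.le
        have h2 : ENNReal.ofReal (r ^ (D-ε)) ^ q = ENNReal.ofReal (r ^ e1) := by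
          rw [ENNReal.ofReal_rpow_of_pos (Real.rpow_pos_of_pos hr0 _), ← Real.rpow_mul hr0.le,
            he1, max_eq_right (by nlinarith : (D+ε)*q ≤ (D-ε)*q)]
        rw [← h2]; exact h1
    have hhi2 : ∀ x ∈ S, μ (closedBall x (2*r)) ≤ ENNReal.ofReal ((2*r) ^ (D-ε)) :=
      fun x hx => (hAb x (hSA hx) (2*r) h2r h2rδ).2
    set N := ∑' _ : ↥S, (1:ℝ≥0∞) with hN
    have hμA : μ A ≤ ENNReal.ofReal ((2*r) ^ (D-ε)) * N := by
      calc μ A ≤ μ (⋃ x ∈ S, closedBall x (2*r)) := measure_mono hScov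
        _ ≤ ∑' x : ↥S, μ (closedBall (x : Euc d) (2*r)) := measure_biUnion_le μ hcnt _
        _ ≤ ∑' x : ↥S, ENNReal.ofReal ((2*r) ^ (D-ε)) * 1 :=
            ENNReal.tsum_le_tsum fun x => by rw [mul_one]; exact hhi2 x x.2
        _ = ENNReal.ofReal ((2*r) ^ (D-ε)) * N := ENNReal.tsum_mul_left
    have hNpack : ENNReal.ofReal (r ^ e1) * N ≤ packSum μ q r := by
      calc ENNReal.ofReal (r ^ e1) * N = ∑' x : ↥S, ENNReal.ofReal (r ^ e1) * 1 :=
            ENNReal.tsum_mul_left.symm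
        _ ≤ ∑' x : ↥S, μ (closedBall (x : Euc d) r) ^ q :=
            ENNReal.tsum_le_tsum fun x => by rw [mul_one]; exact hlow x x.2
        _ ≤ packSum μ q r := le_packSum hpack
    have hc2 : ENNReal.ofReal ((2*r) ^ (D-ε)) ≠ 0 :=
      (ENNReal.ofReal_pos.2 (Real.rpow_pos_of_pos h2r _)).ne'
    have hkey : ENNReal.ofReal t ≤ packSum μ q r := by
      have hre : ENNReal.ofReal t
          = μ A * (ENNReal.ofReal (r ^ e1) * (ENNReal.ofReal ((2*r) ^ (D-ε)))⁻¹) := by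
        rw [ht, ENNReal.ofReal_mul ha.le, div_eq_mul_inv,
          ENNReal.ofReal_mul (Real.rpow_pos_of_pos hr0 _).le,
          ENNReal.ofReal_inv_of_pos (Real.rpow_pos_of_pos h2r _), hadef,
          ENNReal.ofReal_toReal (measure_ne_top μ A)]
      calc ENNReal.ofReal t
          = μ A * (ENNReal.ofReal (r ^ e1) * (ENNReal.ofReal ((2*r) ^ (D-ε)))⁻¹) := hre
        _ ≤ (ENNReal.ofReal ((2*r) ^ (D-ε)) * N) *
            (ENNReal.ofReal (r ^ e1) * (ENNReal.ofReal ((2*r) ^ (D-ε)))⁻¹) :=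
            mul_le_mul_left hμA _
        _ = ENNReal.ofReal (r ^ e1) * N *
            (ENNReal.ofReal ((2*r) ^ (D-ε)) * (ENNReal.ofReal ((2*r) ^ (D-ε)))⁻¹) := by ring
        _ = ENNReal.ofReal (r ^ e1) * N := by
            rw [ENNReal.mul_inv_cancel hc2 ENNReal.ofReal_ne_top, mul_one]
        _ ≤ packSum μ q r := hNpack
    by_cases htop : packSum μ q r = ⊤
    · rw [htop]
      have h1 : elog ⊤ = (⊤ : EReal) := by simp [elog]
      have h2 : (((Real.log r)⁻¹ : ℝ) : EReal) < 0 := by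
        exact_mod_cast EReal.coe_neg'.2 (inv_neg''.2 hlogr)
      rw [h1, EReal.top_mul_of_neg h2]
      exact bot_le
    · have hne0 : packSum μ q r ≠ 0 := (lt_of_lt_of_le (ENNReal.ofReal_pos.2 htpos) hkey).ne'
      have hto : t ≤ (packSum μ q r).toReal := (ENNReal.ofReal_le_iff_le_toReal htop).1 hkey
      have h3 : Real.log t ≤ Real.log (packSum μ q r).toReal := Real.log_le_log htpos hto
      have h4 := mul_le_mul_of_nonpos_right h3 (inv_nonpos.2 hlogr.le)
      rw [elog_pos_finite hne0 htop, ← EReal.coe_mul]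
      exact EReal.coe_le_coe_iff.2 h4
  have hg : Tendsto g (𝓝[>] (0:ℝ)) (𝓝 (e1 - (D-ε))) := by
    have hg2 : Tendsto (fun r : ℝ => (Real.log a - (D-ε)*Real.log 2) * (Real.log r)⁻¹
        + (e1 - (D-ε))) (𝓝[>] (0:ℝ)) (𝓝 (e1 - (D-ε))) := by
      have := (tendsto_invlog.const_mul (Real.log a - (D-ε)*Real.log 2)).add_const (e1 - (D-ε))
      simpa using this
    refine hg2.congr' ?_
    filter_upwards [Ioo_mem_nhdsGT_of_mem
      (show (0:ℝ) ∈ Ico (0:ℝ) 1 by constructor <;> norm_num)] with r hr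
    have hr0 : 0 < r := hr.1
    have hlogr : Real.log r ≠ 0 := (Real.log_neg hr0 hr.2).ne
    have h2r : 0 < 2*r := by linarith
    rw [hgdef]
    simp only
    rw [Real.log_mul ha.ne' (div_pos (Real.rpow_pos_of_pos hr0 _)
        (Real.rpow_pos_of_pos h2r _)).ne',
      Real.log_div (Real.rpow_pos_of_pos hr0 _).ne' (Real.rpow_pos_of_pos h2r _).ne',
      Real.log_rpow hr0, Real.log_rpow h2r, Real.log_mul two_ne_zero hr0.ne']
    field_simp
    ring
  exact liminf_le_of_le_coe hpt hg

lemma tauLow_one_eq {μ : Measure (Euc d)} [IsFiniteMeasure μ] (hμ0 : μ ≠ 0) {D : ℝ}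
    (hex : ExactDim μ D) : tauLow μ 1 = 0 := by
  refine le_antisymm ?_ (tauLow_one_nonneg hμ0)
  have key : ∀ n : ℕ, tauLow μ 1 ≤ ((2/((n:ℝ)+1) : ℝ) : EReal) := by
    intro n
    have hε : (0:ℝ) < 1/((n:ℝ)+1) := by positivity
    have := tauLow_le_bound hμ0 hex 1 hε
    have heq : max ((D + 1/((n:ℝ)+1))*1) ((D - 1/((n:ℝ)+1))*1) - (D - 1/((n:ℝ)+1))
        = 2/((n:ℝ)+1) := by
      rw [mul_one, mul_one, max_eq_left (by linarith)]
      ring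
    rwa [heq] at this
  have hlim : Tendsto (fun n : ℕ => ((2/((n:ℝ)+1) : ℝ) : EReal)) atTop (𝓝 ((0:ℝ) : EReal)) := by
    refine EReal.tendsto_coe.mpr ?_
    have := tendsto_one_div_add_atTop_nhds_zero_nat.const_mul (2:ℝ)
    simpa [div_eq_mul_inv, mul_comm] using this
  have := ge_of_tendsto' hlim key
  simpa using this

end Aux3
section Aux4

variable {d : ℕ}

lemma eLegendre_tauLow_eq {μ : Measure (Euc d)} [IsFiniteMeasure μ] (hμ0 : μ ≠ 0) {D : ℝ}
    (hD0 : 0 ≤ D) (hex : ExactDim μ D) :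
    eLegendre (tauLow μ) ((D : ℝ) : EReal) = ((D : ℝ) : EReal) := by
  have hτ1 : tauLow μ 1 = 0 := tauLow_one_eq hμ0 hex
  refine le_antisymm ?_ ?_
  · refine sInf_le ?_
    refine ⟨1, by rw [hτ1]; simp, fun h => absurd h (EReal.coe_ne_top D), ?_⟩
    rw [hτ1, sub_zero]
    norm_cast
    rw [mul_one]
  · refine le_sInf ?_
    rintro v ⟨q, hqbot, -, rfl⟩
    have hbound : ∀ ε : ℝ, 0 < ε →
        tauLow μ q ≤ ((max ((D+ε)*q) ((D-ε)*q) - (D-ε) : ℝ) : EReal) :=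
      fun ε hε => tauLow_le_bound hμ0 hex q hε
    have hne_top : tauLow μ q ≠ ⊤ := by
      intro h
      have := hbound 1 one_pos
      rw [h] at this
      exact (EReal.coe_ne_top _) (top_le_iff.1 this)
    have hcoe : tauLow μ q = (((tauLow μ q).toReal : ℝ) : EReal) :=
      (EReal.coe_toReal hne_top hqbot).symm
    set t := (tauLow μ q).toReal with htdef
    have hreal : ∀ ε : ℝ, 0 < ε → t ≤ D*q - D + ε*(|q|+1) := by
      intro ε hε
      have h1 := hbound ε hε
      rw [hcoe] at h1
      have h2 : t ≤ max ((D+ε)*q) ((D-ε)*q) - (D-ε) := EReal.coe_le_coe_iff.1 h1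
      have h3 : max ((D+ε)*q) ((D-ε)*q) ≤ D*q + ε*|q| := by
        refine max_le ?_ ?_ <;> nlinarith [le_abs_self q, neg_abs_le q]
      linarith
    have hfin : t ≤ D*q - D := by
      refine le_of_forall_pos_le_add fun ε' hε' => ?_
      have h := hreal (ε'/(|q|+1)) (by positivity)
      have : ε'/(|q|+1)*(|q|+1) = ε' := by
        field_simp
      linarith [h, this.le, this.ge]
    rw [hcoe, ← EReal.coe_mul, ← EReal.coe_sub]
    exact EReal.coe_le_coe_iff.2 (by linarith)

end Aux4
section Aux5

variable {d : ℕ}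

lemma tendsto_rpow_zero' {s' : ℝ} (hs : 0 < s') :
    Tendsto (fun r : ℝ => r ^ s') (𝓝[>] (0:ℝ)) (𝓝 0) := by
  have h1 : Tendsto (fun r : ℝ => Real.exp (Real.log r * s')) (𝓝[>] (0:ℝ)) (𝓝 0) :=
    Real.tendsto_exp_atBot.comp (Real.tendsto_log_nhdsGT_zero.atBot_mul_const hs)
  refine h1.congr' ?_
  filter_upwards [self_mem_nhdsWithin] with r hr
  exact (Real.rpow_def_of_pos hr s').symm

lemma Epoint_compl_null {μ : Measure (Euc d)} [IsFiniteMeasure μ] {D : ℝ}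
    (hex : ExactDim μ D) : μ (Epoint μ ((D : ℝ) : EReal))ᶜ = 0 := by
  set F : Set (Euc d) := msupp μ ∩
    {x | Tendsto (fun r : ℝ => Real.log (μ (closedBall x r)).toReal / Real.log r)
      (𝓝[>] (0:ℝ)) (𝓝 D)} with hFdef
  have hFc : μ Fᶜ = 0 := by
    rw [hFdef, compl_inter]
    refine le_antisymm ?_ zero_le
    calc μ ((msupp μ)ᶜ ∪ _) ≤ μ (msupp μ)ᶜ + μ {x | Tendsto (fun r : ℝ =>
          Real.log (μ (closedBall x r)).toReal / Real.log r) (𝓝[>] (0:ℝ)) (𝓝 D)}ᶜ :=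
        measure_union_le _ _
      _ = 0 := by rw [msupp_compl_null μ, zero_add]; exact hex
  refine measure_mono_null (compl_subset_compl.2 fun x hx => ?_) hFc
  exact mem_Epoint_of_tendsto hx.1 hx.2

lemma dimH_Epoint_lower_aux {μ : Measure (Euc d)} [IsFiniteMeasure μ] (hμ0 : μ ≠ 0) {D : ℝ}
    (hex : ExactDim μ D) {s' : ℝ} (hs0 : 0 < s')
    (hsD : ((s' : ℝ) : EReal) < ((D : ℝ) : EReal)) :
    ENNReal.ofReal s' ≤ dimH (Epoint μ ((D : ℝ) : EReal)) := by
  classical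
  set E := Epoint μ ((D : ℝ) : EReal) with hEdef
  set A : ℕ → Set (Euc d) := fun n => {x | ∀ r : ℝ, 0 < r → r < 1/(n+1) →
    μ (closedBall x r) ≤ ENNReal.ofReal (r ^ s')} with hAdef
  have hδpos : ∀ n : ℕ, (0:ℝ) < 1/((n:ℝ)+1) := fun n => by positivity
  have hclosed : ∀ n, IsClosed (A n) := by
    intro n
    rw [← isOpen_compl_iff, Metric.isOpen_iff]
    intro x hx
    simp only [hAdef, mem_compl_iff, mem_setOf_eq, not_forall] at hx
    obtain ⟨r, hr0, hrn, hviol⟩ := hx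
    have hlt : ENNReal.ofReal (r ^ s') < μ (closedBall x r) :=
      lt_of_not_ge hviol
    have hltR : r ^ s' < (μ (closedBall x r)).toReal :=
      (ENNReal.ofReal_lt_iff_lt_toReal (by positivity) (measure_ne_top μ _)).1 hlt
    have hcont : ContinuousAt (fun ρ : ℝ => ρ ^ s') r :=
      Real.continuousAt_rpow_const r s' (Or.inl hr0.ne')
    have hev : ∀ᶠ ρ in 𝓝 r, ρ ^ s' < (μ (closedBall x r)).toReal ∧ ρ < 1/((n:ℝ)+1) := by
      refine (hcont.eventually_lt_const hltR).and ?_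
      exact Filter.Tendsto.eventually_lt_const hrn (by exact continuousAt_id)
    obtain ⟨ρ, hρr, hρ⟩ := hev.exists_gt
    refine ⟨ρ - r, by linarith, fun y hy => ?_⟩
    simp only [hAdef, mem_compl_iff, mem_setOf_eq, not_forall]
    refine ⟨ρ, by linarith, hρ.2, fun hcon => ?_⟩
    have hsub2 : closedBall x r ⊆ closedBall y ρ := by
      refine closedBall_subset_closedBall' ?_
      have := mem_ball.1 hy
      rw [dist_comm] at this
      linarith
    have h1 : μ (closedBall x r) ≤ ENNReal.ofReal (ρ ^ s') :=
      le_trans (measure_mono hsub2) hcon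
    have h2 : ENNReal.ofReal (ρ ^ s') < μ (closedBall x r) := by
      rw [ENNReal.ofReal_lt_iff_lt_toReal (Real.rpow_nonneg (by linarith) _) (measure_ne_top μ _)]
      exact hρ.1
    exact absurd (lt_of_le_of_lt h1 h2) (lt_irrefl _)
  have hmono : Monotone A := by
    intro n m hnm x hx r hr0 hrm
    refine hx r hr0 (hrm.trans_le ?_)
    have h1 : (0:ℝ) < n + 1 := by positivity
    have h2 : (n:ℝ) + 1 ≤ m + 1 := by exact_mod_cast by omega
    exact one_div_le_one_div_of_le h1 h2
  have hsub : E ⊆ ⋃ n, A n := by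
    intro x hxE
    obtain ⟨hxsupp, hdLow, _⟩ := hxE
    have hfreq : ∀ᶠ r in 𝓝[>] (0:ℝ), ((s' : ℝ) : EReal) <
        elog (μ (closedBall x r)) * (((Real.log r)⁻¹ : ℝ) : EReal) := by
      refine eventually_lt_of_lt_liminf ?_
      rw [← dLow, hdLow]
      exact hsD
    have hev2 : ∀ᶠ r in 𝓝[>] (0:ℝ), (((s' : ℝ) : EReal) <
        elog (μ (closedBall x r)) * (((Real.log r)⁻¹ : ℝ) : EReal)) ∧ r ∈ Ioo (0:ℝ) 1 := by
      filter_upwards [hfreq, Ioo_mem_nhdsGT_of_mem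
        (by constructor <;> norm_num : (0:ℝ) ∈ Ico (0:ℝ) 1)] with r h1 h2 using ⟨h1, h2⟩
    obtain ⟨u, hu, huP⟩ := mem_nhdsGT_iff_exists_Ioo_subset.1 hev2
    obtain ⟨n, hn⟩ := exists_nat_one_div_lt (show (0:ℝ) < min u 1 by
      simp only [lt_min_iff]; exact ⟨hu, one_pos⟩)
    refine mem_iUnion.2 ⟨n, fun r hr0 hrn => ?_⟩
    have hrP : r ∈ Ioo (0:ℝ) u := ⟨hr0, hrn.trans (hn.trans_le (min_le_left _ _))⟩
    obtain ⟨hgt, hr1⟩ := huP hrP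
    rw [localdim_fun_eq hxsupp hr0] at hgt
    have hgtR : s' < Real.log (μ (closedBall x r)).toReal / Real.log r :=
      EReal.coe_lt_coe_iff.1 hgt
    have hlogr : Real.log r < 0 := Real.log_neg hr0 hr1.2
    have hm0 : μ (closedBall x r) ≠ 0 := (hxsupp r hr0).ne'
    have hmt : μ (closedBall x r) ≠ ⊤ := measure_ne_top μ _
    have hmR : 0 < (μ (closedBall x r)).toReal := ENNReal.toReal_pos hm0 hmt
    have h1 : Real.log (μ (closedBall x r)).toReal < s' * Real.log r := by
      calc Real.log (μ (closedBall x r)).toReal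
          = (Real.log (μ (closedBall x r)).toReal / Real.log r) * Real.log r := by
            rw [div_mul_eq_mul_div, mul_div_cancel_right₀ _ hlogr.ne]
        _ < s' * Real.log r := mul_lt_mul_of_neg_right hgtR hlogr
    rw [← Real.log_rpow hr0] at h1
    have h2 := (Real.log_lt_log_iff hmR (Real.rpow_pos_of_pos hr0 _)).1 h1
    calc μ (closedBall x r) = ENNReal.ofReal (μ (closedBall x r)).toReal :=
          (ENNReal.ofReal_toReal hmt).symm
      _ ≤ ENNReal.ofReal (r ^ s') := ENNReal.ofReal_le_ofReal h2.le
  have hEc : μ Eᶜ = 0 := Epoint_compl_null hex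
  have hμE : 0 < μ E :=
    lt_of_lt_of_le (Measure.measure_univ_pos.2 hμ0) (le_measure_of_compl_null hEc)
  have hiUn : μ (⋃ n, (A n ∩ E)) = ⨆ n, μ (A n ∩ E) :=
    Monotone.measure_iUnion fun n m h => inter_subset_inter (hmono h) Subset.rfl
  have hEin : E ⊆ ⋃ n, (A n ∩ E) := by
    intro x hx
    obtain ⟨n, hn⟩ := mem_iUnion.1 (hsub hx)
    exact mem_iUnion.2 ⟨n, hn, hx⟩
  have hex2 : ∃ n, 0 < μ (A n ∩ E) := by
    by_contra h
    push_neg at h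
    simp only [nonpos_iff_eq_zero] at h
    have h2 : μ E ≤ ⨆ n, μ (A n ∩ E) := (measure_mono hEin).trans_eq hiUn
    have h3 : (⨆ n, μ (A n ∩ E)) = 0 := by simp [h]
    rw [h3] at h2
    exact hμE.ne' (le_antisymm h2 zero_le)
  obtain ⟨n, hn⟩ := hex2
  set ν := μ.restrict (A n) with hν
  have hmass : ν ≤ μH[s'] := by
    refine Measure.le_hausdorffMeasure s' ν (ENNReal.ofReal (1/(2*((n:ℝ)+1)))) (by positivity) ?_
    intro s hdiam
    rw [hν, Measure.restrict_apply' (hclosed n).measurableSet]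
    rcases (s ∩ A n).eq_empty_or_nonempty with hse | ⟨x, hxs, hxA⟩
    · rw [hse, measure_empty]; exact zero_le
    · have hdne : EMetric.diam s ≠ ⊤ :=
        (lt_of_le_of_lt hdiam ENNReal.ofReal_lt_top).ne
      set ρ := (EMetric.diam s).toReal with hρdef
      have hρ0 : 0 ≤ ρ := ENNReal.toReal_nonneg
      have hsub2 : s ⊆ closedBall x ρ := by
        intro y hy
        rw [mem_closedBall]
        exact Metric.dist_le_diam_of_mem (Metric.isBounded_iff_ediam_ne_top.2 hdne) hy hxs
      rcases eq_or_ne (EMetric.diam s) 0 with hd0 | hd0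
      · have hss : s.Subsingleton := EMetric.diam_eq_zero_iff.1 hd0
        have hsx : s ∩ A n ⊆ {x} := fun y hy => hss hy.1 hxs
        have hx0 : μ {x} = 0 := by
          have hev : ∀ᶠ r in 𝓝[>] (0:ℝ), μ {x} ≤ ENNReal.ofReal (r ^ s') := by
            filter_upwards [Ioo_mem_nhdsGT_of_mem
              (show (0:ℝ) ∈ Ico (0:ℝ) (1/((n:ℝ)+1)) from ⟨le_rfl, hδpos n⟩)] with r hr
            calc μ {x} ≤ μ (closedBall x r) :=
                  measure_mono (singleton_subset_iff.2 (mem_closedBall_self hr.1.le))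
              _ ≤ ENNReal.ofReal (r ^ s') := hxA r hr.1 hr.2
          have hlim : Tendsto (fun r : ℝ => ENNReal.ofReal (r ^ s')) (𝓝[>] (0:ℝ))
              (𝓝 (ENNReal.ofReal 0)) := ENNReal.tendsto_ofReal (tendsto_rpow_zero' hs0)
          have := ge_of_tendsto hlim hev
          simpa using this
        calc μ (s ∩ A n) ≤ μ {x} := measure_mono hsx
          _ = 0 := hx0
          _ ≤ EMetric.diam s ^ s' := zero_le
      · have hρpos : 0 < ρ := ENNReal.toReal_pos hd0 hdne
        have hρlt : ρ < 1/((n:ℝ)+1) := by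
          have h1 : ρ ≤ 1/(2*((n:ℝ)+1)) :=
            ENNReal.toReal_le_of_le_ofReal (by positivity) hdiam
          have h2 : 1/(2*((n:ℝ)+1)) < 1/((n:ℝ)+1) :=
            one_div_lt_one_div_of_lt (by positivity) (by linarith)
          linarith
        calc μ (s ∩ A n) ≤ μ (closedBall x ρ) :=
              measure_mono (inter_subset_left.trans hsub2)
          _ ≤ ENNReal.ofReal (ρ ^ s') := hxA ρ hρpos hρlt
          _ = ENNReal.ofReal ρ ^ s' := (ENNReal.ofReal_rpow_of_pos hρpos).symm
          _ = EMetric.diam s ^ s' := by rw [hρdef, ENNReal.ofReal_toReal hdne]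
  have hHpos : μH[s'] E ≠ 0 := by
    have h1 : ν E ≤ μH[s'] E := Measure.le_iff'.1 hmass E
    have h2 : 0 < ν E := by
      rw [hν, Measure.restrict_apply' (hclosed n).measurableSet]
      rw [inter_comm] at hn
      exact hn
    exact (lt_of_lt_of_le h2 h1).ne'
  have := le_dimH_of_hausdorffMeasure_ne_zero (d := s'.toNNReal) (s := E) (by
    rwa [Real.coe_toNNReal _ hs0.le])
  exact this

end Aux5
section Aux6

variable {d : ℕ}

lemma dimH_Epoint_upper_aux {μ : Measure (Euc d)} [IsFiniteMeasure μ] {D : ℝ} {s : ℝ}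
    (hDs : ((D : ℝ) : EReal) < ((s : ℝ) : EReal)) (hs0 : 0 < s) :
    dimH (Epoint μ ((D : ℝ) : EReal)) ≤ ENNReal.ofReal s := by
  classical
  set E := Epoint μ ((D : ℝ) : EReal) with hEdef
  -- For each n, build a countable cover of E by enlarged balls
  have key : ∀ n : ℕ, ∃ u : Set (Euc d × ℝ), u.Countable ∧
      (∀ b ∈ u, 0 < b.2 ∧ b.2 ≤ 1/((n:ℝ)+1) ∧
        ENNReal.ofReal (b.2 ^ s) ≤ μ (closedBall b.1 b.2)) ∧
      (u.PairwiseDisjoint fun b => closedBall b.1 b.2) ∧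
      E ⊆ ⋃ b ∈ u, closedBall b.1 (4 * b.2) := by
    intro n
    set δ : ℝ := 1/((n:ℝ)+1) with hδdef
    have hδ0 : 0 < δ := by positivity
    set T : Set (Euc d × ℝ) := {p | p.1 ∈ E ∧ 0 < p.2 ∧ p.2 ≤ δ ∧
      ENNReal.ofReal (p.2 ^ s) ≤ μ (closedBall p.1 p.2)} with hTdef
    obtain ⟨u, huT, hdisj, hcov⟩ :=
      Vitali.exists_disjoint_subfamily_covering_enlargement_closedBall T Prod.fst Prod.snd δ
        (fun p hp => hp.2.2.1) 4 (by norm_num)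
    have hucnt : u.Countable := by
      have hdisj2 : Pairwise (Function.onFun Disjoint fun i : ↥u => closedBall (i : Euc d × ℝ).1
          (i : Euc d × ℝ).2) := fun i j hij => hdisj i.2 j.2 (Subtype.coe_injective.ne hij)
      have hc := Measure.countable_meas_pos_of_disjoint_iUnion (μ := μ)
        (As := fun i : ↥u => closedBall (i : Euc d × ℝ).1 (i : Euc d × ℝ).2)
        (fun _ => measurableSet_closedBall) hdisj2
      have hall : {i : ↥u | 0 < μ (closedBall (i : Euc d × ℝ).1 (i : Euc d × ℝ).2)} = univ := by
        refine eq_univ_of_forall fun i => ?_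
        have hiT := huT i.2
        exact lt_of_lt_of_le (ENNReal.ofReal_pos.2 (Real.rpow_pos_of_pos hiT.2.1 _)) hiT.2.2.2
      rw [hall] at hc
      exact countable_coe_iff.1 (countable_univ_iff.1 hc)
    refine ⟨u, hucnt, fun b hb => ⟨(huT hb).2.1, (huT hb).2.2.1, (huT hb).2.2.2⟩, hdisj, ?_⟩
    intro x hxE
    obtain ⟨hxsupp, hdLow, -⟩ := id hxE
    have hfreq : ∃ᶠ r in 𝓝[>] (0:ℝ),
        elog (μ (closedBall x r)) * (((Real.log r)⁻¹ : ℝ) : EReal) < ((s : ℝ) : EReal) := by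
      refine frequently_lt_of_liminf_lt ?_ ?_
      · isBoundedDefault
      · rw [← dLow, hdLow]; exact hDs
    have hev : ∀ᶠ r in 𝓝[>] (0:ℝ), r ∈ Ioo (0:ℝ) (min δ 1) :=
      Ioo_mem_nhdsGT_of_mem ⟨le_rfl, lt_min hδ0 one_pos⟩
    obtain ⟨r, hlt, hr0, hrδ1⟩ := (hfreq.and_eventually hev).exists
    have hrδ : r ≤ δ := (hrδ1.trans_le (min_le_left _ _)).le
    have hr1 : r < 1 := hrδ1.trans_le (min_le_right _ _)
    rw [localdim_fun_eq hxsupp hr0] at hlt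
    have hltR : Real.log (μ (closedBall x r)).toReal / Real.log r < s :=
      EReal.coe_lt_coe_iff.1 hlt
    have hlogr : Real.log r < 0 := Real.log_neg hr0 hr1
    have hm0 : μ (closedBall x r) ≠ 0 := (hxsupp r hr0).ne'
    have hmt : μ (closedBall x r) ≠ ⊤ := measure_ne_top μ _
    have hmR : 0 < (μ (closedBall x r)).toReal := ENNReal.toReal_pos hm0 hmt
    have h1 : s * Real.log r < Real.log (μ (closedBall x r)).toReal := by
      calc s * Real.log r < (Real.log (μ (closedBall x r)).toReal / Real.log r) * Real.log r :=
            mul_lt_mul_of_neg_right hltR hlogr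
        _ = Real.log (μ (closedBall x r)).toReal := by
            rw [div_mul_eq_mul_div, mul_div_cancel_right₀ _ hlogr.ne]
    rw [← Real.log_rpow hr0] at h1
    have h2 := (Real.log_lt_log_iff (Real.rpow_pos_of_pos hr0 _) hmR).1 h1
    have hmem : (x, r) ∈ T := by
      refine ⟨hxE, hr0, hrδ, ?_⟩
      calc ENNReal.ofReal (r ^ s) ≤ ENNReal.ofReal (μ (closedBall x r)).toReal :=
            ENNReal.ofReal_le_ofReal h2.le
        _ = μ (closedBall x r) := ENNReal.ofReal_toReal hmt
    obtain ⟨b, hbu, hsub⟩ := hcov (x, r) hmem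
    exact mem_biUnion hbu (hsub (mem_closedBall_self hr0.le))
  choose u hucnt hub hudisj hucov using key
  haveI : ∀ n, Countable ↥(u n) := fun n => (hucnt n).to_subtype
  have hH : μH[s] E ≤ ENNReal.ofReal (8 ^ s) * μ univ := by
    have hrlim : Tendsto (fun n : ℕ => ENNReal.ofReal (8/((n:ℝ)+1))) atTop (𝓝 0) := by
      have h0 : Tendsto (fun n : ℕ => 8/((n:ℝ)+1)) atTop (𝓝 0) := by
        have := tendsto_one_div_add_atTop_nhds_zero_nat.const_mul (8:ℝ)
        simpa [div_eq_mul_inv, mul_comm] using this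
      have := ENNReal.tendsto_ofReal h0
      simpa using this
    have hmain := Measure.hausdorffMeasure_le_liminf_tsum (X := Euc d) s E
      (fun n : ℕ => ENNReal.ofReal (8/((n:ℝ)+1)))
      hrlim
      (fun n (b : ↥(u n)) => closedBall (b : Euc d × ℝ).1 (4 * (b : Euc d × ℝ).2))
      ?_ ?_
    · refine hmain.trans ?_
      refine liminf_le_of_frequently_le' ?_
      refine Frequently.of_forall fun n => ?_
      calc ∑' b : ↥(u n), EMetric.diam (closedBall (b : Euc d × ℝ).1 (4 * (b : Euc d × ℝ).2)) ^ s
          ≤ ∑' b : ↥(u n), ENNReal.ofReal (8 ^ s) * μ (closedBall (b : Euc d × ℝ).1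
            (b : Euc d × ℝ).2) := by
            refine ENNReal.tsum_le_tsum fun b => ?_
            obtain ⟨hb0, hbδ, hbμ⟩ := hub n _ b.2
            have hdiam : EMetric.diam (closedBall (b : Euc d × ℝ).1 (4 * (b : Euc d × ℝ).2))
                ≤ ENNReal.ofReal (8 * (b : Euc d × ℝ).2) := by
              refine Metric.ediam_le_of_forall_dist_le fun y hy z hz => ?_
              calc dist y z ≤ dist y (b : Euc d × ℝ).1 + dist (b : Euc d × ℝ).1 z :=
                    dist_triangle _ _ _
                _ ≤ 4 * (b : Euc d × ℝ).2 + 4 * (b : Euc d × ℝ).2 := by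
                    have h1 := mem_closedBall.1 hy
                    have h2 := mem_closedBall.1 hz
                    rw [dist_comm] at h2
                    linarith
                _ = 8 * (b : Euc d × ℝ).2 := by ring
            calc EMetric.diam (closedBall (b : Euc d × ℝ).1 (4 * (b : Euc d × ℝ).2)) ^ s
                ≤ ENNReal.ofReal (8 * (b : Euc d × ℝ).2) ^ s :=
                  ENNReal.rpow_le_rpow hdiam hs0.le
              _ = ENNReal.ofReal ((8 * (b : Euc d × ℝ).2) ^ s) :=
                  ENNReal.ofReal_rpow_of_pos (by linarith)
              _ = ENNReal.ofReal (8 ^ s * (b : Euc d × ℝ).2 ^ s) := by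
                  rw [Real.mul_rpow (by norm_num) hb0.le]
              _ = ENNReal.ofReal (8 ^ s) * ENNReal.ofReal ((b : Euc d × ℝ).2 ^ s) :=
                  ENNReal.ofReal_mul (by positivity)
              _ ≤ ENNReal.ofReal (8 ^ s) * μ (closedBall (b : Euc d × ℝ).1 (b : Euc d × ℝ).2) :=
                  mul_le_mul_right hbμ _
        _ = ENNReal.ofReal (8 ^ s) * ∑' b : ↥(u n), μ (closedBall (b : Euc d × ℝ).1
              (b : Euc d × ℝ).2) := ENNReal.tsum_mul_left
        _ ≤ ENNReal.ofReal (8 ^ s) * μ univ := by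
            refine mul_le_mul_right ?_ _
            rw [← measure_biUnion (hucnt n) (hudisj n) (fun _ _ => measurableSet_closedBall)]
            exact measure_mono (subset_univ _)
    · refine Eventually.of_forall fun n => ?_
      intro b
      obtain ⟨hb0, hbδ, -⟩ := hub n _ b.2
      refine le_trans (Metric.ediam_le_of_forall_dist_le (C := 8*(b : Euc d × ℝ).2)
          fun y hy z hz => ?_) (ENNReal.ofReal_le_ofReal ?_)
      · calc dist y z ≤ dist y (b : Euc d × ℝ).1 + dist (b : Euc d × ℝ).1 z := dist_triangle _ _ _
          _ ≤ 4 * (b : Euc d × ℝ).2 + 4 * (b : Euc d × ℝ).2 := by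
              have h1 := mem_closedBall.1 hy
              have h2 := mem_closedBall.1 hz
              rw [dist_comm] at h2
              linarith
          _ = 8 * (b : Euc d × ℝ).2 := by ring
      · have h8 : 8/((n:ℝ)+1) = 8 * (1/((n:ℝ)+1)) := by ring
        linarith
    · refine Eventually.of_forall fun n => (hucov n).trans ?_
      rw [biUnion_eq_iUnion]
  have hne : μH[((s.toNNReal : ℝ≥0) : ℝ)] E ≠ ⊤ := by
    rw [Real.coe_toNNReal _ hs0.le]
    exact (hH.trans_lt (ENNReal.mul_lt_top ENNReal.ofReal_lt_top (measure_lt_top μ _))).ne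
  have := dimH_le_of_hausdorffMeasure_ne_top hne
  exact this

end Aux6
/-- an exact dimensional measure strongly obeys the multifractal
formalism at its dimension `D`, which is a fixed point of `τ_μ*`. -/
theorem statement19 (d : ℕ) (hd : 1 ≤ d) (μ : Measure (Euc d)) (hμ : McPlus μ)
    (D : ℝ) (hD0 : 0 ≤ D) (hDd : D ≤ (d : ℝ)) (hex : ExactDim μ D) :
    ((D : ℝ) : EReal) ≤ dimHE (Epoint μ ((D : ℝ) : EReal)) ∧
    eLegendre (tauLow μ) ((D : ℝ) : EReal) = ((D : ℝ) : EReal) ∧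
    dimHE (Epoint μ ((D : ℝ) : EReal)) = ((D : ℝ) : EReal) := by
  obtain ⟨hfin, hμ0, -⟩ := hμ
  haveI := hfin
  set E := Epoint μ ((D : ℝ) : EReal) with hEdef
  have hupper : dimH E ≤ ENNReal.ofReal D := by
    have hlim : Tendsto (fun n : ℕ => ENNReal.ofReal (D + 1/((n:ℝ)+1))) atTop
        (𝓝 (ENNReal.ofReal D)) := by
      refine ENNReal.tendsto_ofReal ?_
      have := tendsto_one_div_add_atTop_nhds_zero_nat.const_add D
      simpa using this
    refine ge_of_tendsto' hlim fun n => ?_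
    have h1 : (0:ℝ) < 1/((n:ℝ)+1) := by positivity
    exact dimH_Epoint_upper_aux (EReal.coe_lt_coe_iff.2 (by linarith)) (by linarith)
  have hlower : ENNReal.ofReal D ≤ dimH E := by
    rcases eq_or_lt_of_le hD0 with h0 | hDpos
    · simp [← h0]
    · have hlim : Tendsto (fun n : ℕ => ENNReal.ofReal (D - D/((n:ℝ)+2))) atTop
          (𝓝 (ENNReal.ofReal D)) := by
        refine ENNReal.tendsto_ofReal ?_
        have h1 : Tendsto (fun n : ℕ => 1/((n:ℝ)+2)) atTop (𝓝 0) := by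
          have h2 := (tendsto_one_div_add_atTop_nhds_zero_nat (𝕜 := ℝ)).comp
            (tendsto_add_atTop_nat 1)
          refine h2.congr fun n => ?_
          simp only [Function.comp_apply]
          push_cast
          ring_nf
        have h3 := h1.const_mul D
        have h4 := tendsto_const_nhds (x := D) (f := atTop (α := ℕ)) |>.sub h3
        simp only [mul_zero, sub_zero] at h4
        refine h4.congr fun n => ?_
        rw [mul_one_div]
      refine le_of_tendsto' hlim fun n => ?_
      have hn2 : (1:ℝ) < (n:ℝ) + 2 := by
        have := Nat.cast_nonneg (α := ℝ) n
        linarith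
      have hlt : D/((n:ℝ)+2) < D := div_lt_self hDpos hn2
      have hgt : 0 < D/((n:ℝ)+2) := by positivity
      exact dimH_Epoint_lower_aux hμ0 hex (by linarith) (EReal.coe_lt_coe_iff.2 (by linarith))
  have hdimH : dimH E = ENNReal.ofReal D := le_antisymm hupper hlower
  have hEne : E ≠ ∅ := by
    intro h
    have h1 : 0 < μ E :=
      lt_of_lt_of_le (Measure.measure_univ_pos.2 hμ0)
        (le_measure_of_compl_null (Epoint_compl_null hex))
    rw [h] at h1
    simp at h1
  have hdimHE : dimHE E = ((D : ℝ) : EReal) := by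
    rw [dimHE, if_neg hEne, hdimH, EReal.coe_ennreal_ofReal, sup_eq_left.mpr hD0]
  exact ⟨hdimHE ▸ le_refl _, eLegendre_tauLow_eq hμ0 hD0 hex, hdimHE⟩

end
end
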